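/- arXiv:math/0601226 — 5 statements merged into one kernel-verified Lean document; each statement's English description precedes it below -/
import Mathlib

section
/- For an unbounded metric space (X,d) and integer n ≥ 0, the following are equivalent: (a) asdim(X,d) ≤ n; (b) there exists a metric d₁ on X, coarsely equivalent to d, such that the Nagata-Assouad dimension of (X,d₁) is at most n. -/
/-- `d` is a metric on `X`. -/
structure IsMetricOn {X : Type*} (d : X → X → ℝ) : Prop where
  refl : ∀ x, d x x = 0
  eq_of_eq_zero : ∀ x y, d x y = 0 → x = y
  symm : ∀ x y, d x y = d y x
  triangle : ∀ x y z, d x z ≤ d x y + d y z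

/-- Nagata-Assouad dimension at most `n` for the distance function `d` on `X`. -/
def NagataDimWithLE {X : Type*} (d : X → X → ℝ) (n : ℕ) : Prop :=
  ∃ C : ℝ, 0 < C ∧ ∀ r : ℝ, 0 < r →
    ∃ U : Fin (n + 1) → Set (Set X),
      (∀ x : X, ∃ i, ∃ V ∈ U i, x ∈ V) ∧
      (∀ i, ∀ V ∈ U i, ∀ W ∈ U i, V ≠ W → ∀ x ∈ V, ∀ y ∈ W, r < d x y) ∧
      (∀ i, ∀ V ∈ U i, ∀ x ∈ V, ∀ y ∈ V, d x y ≤ C * r)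

/-- Asymptotic dimension at most `n` for the distance function `d` on `X`. -/
def AsdimWithLE {X : Type*} (d : X → X → ℝ) (n : ℕ) : Prop :=
  ∀ r : ℝ, 0 < r → ∃ D : ℝ, 0 < D ∧
    ∃ U : Fin (n + 1) → Set (Set X),
      (∀ x : X, ∃ i, ∃ V ∈ U i, x ∈ V) ∧
      (∀ i, ∀ V ∈ U i, ∀ W ∈ U i, V ≠ W → ∀ x ∈ V, ∀ y ∈ W, r < d x y) ∧
      (∀ i, ∀ V ∈ U i, ∀ x ∈ V, ∀ y ∈ V, d x y ≤ D)

/-- Two distance functions on `X` are coarsely equivalent. -/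
def CoarselyEquivalent {X : Type*} (d d' : X → X → ℝ) : Prop :=
  ∃ ρ₁ ρ₂ : ℝ → ℝ, Monotone ρ₁ ∧ Monotone ρ₂ ∧
    Filter.Tendsto ρ₁ Filter.atTop Filter.atTop ∧
    ∀ x y : X, ρ₁ (d x y) ≤ d' x y ∧ d' x y ≤ ρ₂ (d x y)



namespace AsdimAux

noncomputable def sseq (D : ℝ → ℝ) : ℕ → ℝ
  | 0 => 1
  | k + 1 => max (2 * sseq D k) (D (sseq D k))

lemma one_le_sseq (D : ℝ → ℝ) : ∀ k, 1 ≤ sseq D k := by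
  intro k
  induction k with
  | zero => simp [sseq]
  | succ k ih =>
    refine le_trans ?_ (le_max_left _ _)
    nlinarith

lemma sseq_pos (D : ℝ → ℝ) (k : ℕ) : 0 < sseq D k :=
  lt_of_lt_of_le one_pos (one_le_sseq D k)

lemma two_mul_sseq_le (D : ℝ → ℝ) (k : ℕ) : 2 * sseq D k ≤ sseq D (k + 1) :=
  le_max_left _ _

lemma sseq_lt_succ (D : ℝ → ℝ) (k : ℕ) : sseq D k < sseq D (k + 1) := by
  have := two_mul_sseq_le D k
  have := sseq_pos D k
  linarith

lemma sseq_strictMono (D : ℝ → ℝ) : StrictMono (sseq D) :=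
  strictMono_nat_of_lt_succ (sseq_lt_succ D)

lemma two_pow_le_sseq (D : ℝ → ℝ) : ∀ k, (2 : ℝ) ^ k ≤ sseq D k := by
  intro k
  induction k with
  | zero => simp [sseq]
  | succ k ih =>
    refine le_trans ?_ (two_mul_sseq_le D k)
    rw [pow_succ]
    nlinarith [sseq_pos D k]

noncomputable def fc (D : ℝ → ℝ) (t : ℝ) : ℕ := sSup {k | sseq D k ≤ t}

lemma fc_bdd (D : ℝ → ℝ) (t : ℝ) : BddAbove {k | sseq D k ≤ t} := by
  refine ⟨⌊t⌋₊, fun k hk => Nat.le_floor (le_of_lt ?_)⟩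
  calc (k : ℝ) < 2 ^ k := by exact_mod_cast (Nat.lt_two_pow_self (n := k))
    _ ≤ sseq D k := two_pow_le_sseq D k
    _ ≤ t := hk

lemma le_fc (D : ℝ → ℝ) {t : ℝ} {k : ℕ} (h : sseq D k ≤ t) : k ≤ fc D t :=
  le_csSup (fc_bdd D t) h

lemma fc_le (D : ℝ → ℝ) {t : ℝ} {N : ℕ} (h : t ≤ sseq D N) : fc D t ≤ N := by
  rcases Set.eq_empty_or_nonempty {k | sseq D k ≤ t} with he | hne
  · simp [fc, he]
  · exact csSup_le hne fun k hk =>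
      (sseq_strictMono D).le_iff_le.mp (le_trans hk h)

lemma fc_mono (D : ℝ → ℝ) : Monotone (fc D) := by
  intro a b hab
  rcases Set.eq_empty_or_nonempty {k | sseq D k ≤ a} with he | hne
  · simp [fc, he]
  · exact csSup_le_csSup (fc_bdd D b) hne fun k hk => le_trans hk hab

lemma fc_zero (D : ℝ → ℝ) : fc D 0 = 0 := by
  have : {k | sseq D k ≤ (0:ℝ)} = ∅ := by
    ext k; simp only [Set.mem_setOf_eq, Set.mem_empty_iff_false, iff_false, not_le]
    exact sseq_pos D k
  simp [fc, this]

lemma sseq_fc_le (D : ℝ → ℝ) {t : ℝ} (ht : 1 ≤ t) : sseq D (fc D t) ≤ t := by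
  have hne : {k | sseq D k ≤ t}.Nonempty := ⟨0, by simpa [sseq] using ht⟩
  exact Nat.sSup_mem hne (fc_bdd D t)

lemma fc_add (D : ℝ → ℝ) (a b : ℝ) :
    fc D (a + b) ≤ fc D a + fc D b + 1 := by
  rcases Nat.eq_zero_or_pos (fc D (a + b)) with h0 | hpos
  · omega
  obtain ⟨j, hj⟩ : ∃ j, fc D (a + b) = j + 1 := ⟨fc D (a+b) - 1, by omega⟩
  have hne : {k | sseq D k ≤ a + b}.Nonempty := by
    by_contra hc
    rw [Set.not_nonempty_iff_eq_empty] at hc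
    simp [fc, hc] at hpos
  have hmem : sseq D (fc D (a + b)) ≤ a + b := Nat.sSup_mem hne (fc_bdd D (a+b))
  have h2 : 2 * sseq D j ≤ sseq D (j + 1) := two_mul_sseq_le D j
  rw [hj] at hmem
  have hjm : sseq D j ≤ max a b := by
    rcases le_total a b with h | h
    · rw [max_eq_right h]; linarith
    · rw [max_eq_left h]; linarith
  have : j ≤ fc D (max a b) := le_fc D hjm
  have hmax : fc D (max a b) ≤ fc D a + fc D b := by
    rcases le_total a b with h | h
    · rw [max_eq_right h]; omega
    · rw [max_eq_left h]; omega
  omega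

end AsdimAux

section Main

open AsdimAux

theorem asdim_iff_exists_coarse_metric_nagata
    {X : Type*} [MetricSpace X] (hX : ¬ Bornology.IsBounded (Set.univ : Set X)) (n : ℕ) :
    AsdimWithLE (fun x y : X => dist x y) n ↔
      ∃ d₁ : X → X → ℝ, IsMetricOn d₁ ∧
        CoarselyEquivalent (fun x y : X => dist x y) d₁ ∧ NagataDimWithLE d₁ n := by
  constructor
  · -- forward direction
    intro h
    classical
    -- the diameter-bound function
    set D : ℝ → ℝ := fun r => if h' : 0 < r then Classical.choose (h r h') else 1 with hDdef
    have hDspec : ∀ r : ℝ, 0 < r → 0 < D r ∧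
        ∃ U : Fin (n + 1) → Set (Set X),
          (∀ x : X, ∃ i, ∃ V ∈ U i, x ∈ V) ∧
          (∀ i, ∀ V ∈ U i, ∀ W ∈ U i, V ≠ W → ∀ x ∈ V, ∀ y ∈ W, r < dist x y) ∧
          (∀ i, ∀ V ∈ U i, ∀ x ∈ V, ∀ y ∈ V, dist x y ≤ D r) := by
      intro r hr
      have hspec := Classical.choose_spec (h r hr)
      simp only [hDdef, dif_pos hr]
      exact hspec
    set d₁ : X → X → ℝ :=
      fun x y => if x = y then 0 else (fc D (dist x y) : ℝ) + 1 with hd₁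
    have hd₁_nonneg : ∀ x y, 0 ≤ d₁ x y := by
      intro x y
      by_cases hxy : x = y
      · simp [hd₁, hxy]
      · simp only [hd₁, if_neg hxy]
        positivity
    have hd₁_le : ∀ x y, d₁ x y ≤ (fc D (dist x y) : ℝ) + 1 := by
      intro x y
      by_cases hxy : x = y
      · simp only [hd₁, if_pos hxy]; positivity
      · simp [hd₁, if_neg hxy]
    refine ⟨d₁, ?_, ?_, ?_⟩
    · -- metric axioms
      constructor
      · intro x; simp [hd₁]
      · intro x y hxy
        by_contra hne
        rw [hd₁] at hxy
        simp only [if_neg hne] at hxy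
        have : (0:ℝ) ≤ (fc D (dist x y) : ℝ) := by positivity
        linarith
      · intro x y
        by_cases hxy : x = y
        · simp [hd₁, hxy]
        · rw [hd₁]
          simp only [if_neg hxy, if_neg (fun h => hxy h.symm : ¬ y = x)]
          rw [dist_comm]
      · intro x y z
        by_cases hxz : x = z
        · have h0 : d₁ x z = 0 := by rw [hd₁]; simp [hxz]
          rw [h0]
          exact add_nonneg (hd₁_nonneg x y) (hd₁_nonneg y z)
        by_cases hxy : x = y
        · subst hxy
          have h0 : d₁ x x = 0 := by rw [hd₁]; simp
          rw [h0, zero_add]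
        by_cases hyz : y = z
        · subst hyz
          have h0 : d₁ y y = 0 := by rw [hd₁]; simp
          rw [h0, add_zero]
        · have e1 : d₁ x z = (fc D (dist x z) : ℝ) + 1 := by rw [hd₁]; simp [hxz]
          have e2 : d₁ x y = (fc D (dist x y) : ℝ) + 1 := by rw [hd₁]; simp [hxy]
          have e3 : d₁ y z = (fc D (dist y z) : ℝ) + 1 := by rw [hd₁]; simp [hyz]
          rw [e1, e2, e3]
          have h1 : fc D (dist x z) ≤ fc D (dist x y) + fc D (dist y z) + 1 := by
            calc fc D (dist x z) ≤ fc D (dist x y + dist y z) :=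
                  fc_mono D (dist_triangle x y z)
              _ ≤ fc D (dist x y) + fc D (dist y z) + 1 := fc_add D _ _
          have : (fc D (dist x z) : ℝ) ≤ (fc D (dist x y) : ℝ) + (fc D (dist y z) : ℝ) + 1 := by
            exact_mod_cast h1
          linarith
    · -- coarse equivalence
      refine ⟨fun t => (fc D t : ℝ), fun t => (fc D t : ℝ) + 1, ?_, ?_, ?_, ?_⟩
      · intro a b hab
        show (fc D a : ℝ) ≤ (fc D b : ℝ)
        exact_mod_cast fc_mono D hab
      · intro a b hab
        show (fc D a : ℝ) + 1 ≤ (fc D b : ℝ) + 1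
        have : (fc D a : ℝ) ≤ (fc D b : ℝ) := by exact_mod_cast fc_mono D hab
        linarith
      · rw [Filter.tendsto_atTop]
        intro b
        rw [Filter.eventually_atTop]
        refine ⟨sseq D ⌈b⌉₊, fun t ht => ?_⟩
        have h1 : (⌈b⌉₊ : ℕ) ≤ fc D t := le_fc D ht
        calc b ≤ (⌈b⌉₊ : ℝ) := Nat.le_ceil b
          _ ≤ (fc D t : ℝ) := by exact_mod_cast h1
      · intro x y
        constructor
        · by_cases hxy : x = y
          · simp [hd₁, hxy, fc_zero]
          · simp only [hd₁, if_neg hxy]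
            have : (0:ℝ) ≤ (fc D (dist x y) : ℝ) := by positivity
            linarith
        · exact hd₁_le x y
    · -- Nagata dimension
      refine ⟨4, by norm_num, ?_⟩
      intro r hr
      rcases lt_or_ge r 1 with hr1 | hr1
      · -- small scales: singletons
        refine ⟨fun _ => {V | ∃ x : X, V = {x}}, ?_, ?_, ?_⟩
        · intro x; exact ⟨0, Set.singleton x, ⟨x, rfl⟩, rfl⟩
        · intro i V hV W hW hVW x' hx' y' hy'
          obtain ⟨x, rfl⟩ := hV
          obtain ⟨y, rfl⟩ := hW
          rw [Set.mem_singleton_iff] at hx' hy'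
          have hxy : x' ≠ y' := by
            rw [hx', hy']
            intro hcon
            exact hVW (by rw [hcon])
          simp only [hd₁, if_neg hxy]
          have : (0:ℝ) ≤ (fc D (dist x' y') : ℝ) := by positivity
          linarith
        · intro i V hV x' hx' y' hy'
          obtain ⟨x, rfl⟩ := hV
          rw [Set.mem_singleton_iff] at hx' hy'
          have hxy : x' = y' := hx'.trans hy'.symm
          simp only [hd₁, if_pos hxy]
          linarith
      · -- large scales
        set k : ℕ := ⌈r⌉₊ with hk
        have hkr : r ≤ (k : ℝ) := Nat.le_ceil r
        have hkr1 : (k : ℝ) < r + 1 := Nat.ceil_lt_add_one (by linarith)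
        obtain ⟨hDpos, U, hcov, hdis, hdiam⟩ := hDspec (sseq D k) (sseq_pos D k)
        have hDle : D (sseq D k) ≤ sseq D (k + 1) := le_max_right _ _
        refine ⟨U, hcov, ?_, ?_⟩
        · intro i V hV W hW hVW x hx y hy
          have hd : sseq D k < dist x y := hdis i V hV W hW hVW x hx y hy
          have hxy : x ≠ y := by
            intro h; subst h
            simp only [dist_self] at hd
            exact absurd hd (not_lt.mpr (le_of_lt (sseq_pos D k)))
          simp only [hd₁, if_neg hxy]
          have hkfc : k ≤ fc D (dist x y) := le_fc D (le_of_lt hd)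
          have : (k : ℝ) ≤ (fc D (dist x y) : ℝ) := by exact_mod_cast hkfc
          linarith
        · intro i V hV x hx y hy
          have hd : dist x y ≤ D (sseq D k) := hdiam i V hV x hx y hy
          have hfc : fc D (dist x y) ≤ k + 1 := fc_le D (le_trans hd hDle)
          have h1 : (fc D (dist x y) : ℝ) ≤ (k : ℝ) + 1 := by exact_mod_cast hfc
          calc d₁ x y ≤ (fc D (dist x y) : ℝ) + 1 := hd₁_le x y
            _ ≤ (k : ℝ) + 2 := by linarith
            _ ≤ r + 3 := by linarith
            _ ≤ 4 * r := by linarith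
  · -- backward direction
    rintro ⟨d₁, hmet, ⟨ρ₁, ρ₂, hm1, hm2, htend, hbnd⟩, C, hC, hN⟩
    intro r hr
    set r₁ : ℝ := max (ρ₂ r) 1 with hr₁
    have hr₁pos : 0 < r₁ := lt_of_lt_of_le one_pos (le_max_right _ _)
    obtain ⟨U, hcov, hdis, hdiam⟩ := hN r₁ hr₁pos
    obtain ⟨M, hM⟩ := Filter.eventually_atTop.mp (htend.eventually_gt_atTop (C * r₁))
    refine ⟨max M 1, lt_of_lt_of_le one_pos (le_max_right _ _), U, hcov, ?_, ?_⟩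
    · intro i V hV W hW hVW x hx y hy
      have hd : r₁ < d₁ x y := hdis i V hV W hW hVW x hx y hy
      by_contra hc
      push_neg at hc
      have h1 : d₁ x y ≤ ρ₂ (dist x y) := (hbnd x y).2
      have h2 : ρ₂ (dist x y) ≤ ρ₂ r := hm2 hc
      have : d₁ x y ≤ r₁ := le_trans h1 (le_trans h2 (le_max_left _ _))
      linarith
    · intro i V hV x hx y hy
      have hd : d₁ x y ≤ C * r₁ := hdiam i V hV x hx y hy
      by_contra hc
      push_neg at hc
      have hMd : M ≤ dist x y := le_trans (le_max_left _ _) (le_of_lt hc)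
      have h1 : C * r₁ < ρ₁ (dist x y) := hM (dist x y) hMd
      have h2 : ρ₁ (dist x y) ≤ d₁ x y := (hbnd x y).1
      linarith

end Main
end

section
/- Let X be a metric space and n ≥ 0 an integer. If S^n is a Lipschitz extensor of X, then S^{n+1} is also a Lipschitz extensor of X. -/
open Metric Set Finset

noncomputable section SphereExtAux

/-- Normalization is Lipschitz away from the origin. -/
lemma normalize_sub_le {E : Type*} [NormedAddCommGroup E] [NormedSpace ℝ E]
    {u v : E} {c : ℝ} (hc : 0 < c) (hu : c ≤ ‖u‖) (hv : c ≤ ‖v‖) :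
    ‖‖u‖⁻¹ • u - ‖v‖⁻¹ • v‖ ≤ 2 / c * ‖u - v‖ := by
  have ha : 0 < ‖u‖ := hc.trans_le hu
  have hb : 0 < ‖v‖ := hc.trans_le hv
  have key : ‖u‖⁻¹ • u - ‖v‖⁻¹ • v = ‖u‖⁻¹ • (u - v) + (‖u‖⁻¹ - ‖v‖⁻¹) • v := by
    rw [smul_sub, sub_smul]; abel
  rw [key]
  have h1 : ‖‖u‖⁻¹ • (u - v)‖ = ‖u‖⁻¹ * ‖u - v‖ := by
    rw [norm_smul, Real.norm_eq_abs, abs_of_pos (inv_pos.2 ha)]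
  have h2 : ‖(‖u‖⁻¹ - ‖v‖⁻¹) • v‖ = |‖u‖⁻¹ - ‖v‖⁻¹| * ‖v‖ := by
    rw [norm_smul, Real.norm_eq_abs]
  have h3 : |‖u‖⁻¹ - ‖v‖⁻¹| * ‖v‖ ≤ ‖u‖⁻¹ * ‖u - v‖ := by
    have heq : ‖u‖⁻¹ - ‖v‖⁻¹ = (‖v‖ - ‖u‖) / (‖u‖ * ‖v‖) := by field_simp
    rw [heq, abs_div, abs_of_pos (mul_pos ha hb), div_mul_eq_mul_div]
    rw [div_le_iff₀ (mul_pos ha hb)]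
    have h4 : |‖v‖ - ‖u‖| ≤ ‖u - v‖ := by
      have := abs_norm_sub_norm_le v u
      rwa [norm_sub_rev] at this
    calc |‖v‖ - ‖u‖| * ‖v‖ ≤ ‖u - v‖ * ‖v‖ := mul_le_mul_of_nonneg_right h4 hb.le
      _ = ‖u‖⁻¹ * ‖u - v‖ * (‖u‖ * ‖v‖) := by field_simp
  have h5 : ‖u‖⁻¹ ≤ 1 / c := by
    rw [div_eq_inv_mul, mul_one]
    exact inv_anti₀ hc hu
  calc ‖‖u‖⁻¹ • (u - v) + (‖u‖⁻¹ - ‖v‖⁻¹) • v‖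
      ≤ ‖‖u‖⁻¹ • (u - v)‖ + ‖(‖u‖⁻¹ - ‖v‖⁻¹) • v‖ := norm_add_le _ _
    _ ≤ ‖u‖⁻¹ * ‖u - v‖ + ‖u‖⁻¹ * ‖u - v‖ := by rw [h1, h2]; exact add_le_add le_rfl h3
    _ = 2 * ‖u‖⁻¹ * ‖u - v‖ := by ring
    _ ≤ 2 / c * ‖u - v‖ := by
        apply mul_le_mul_of_nonneg_right _ (norm_nonneg _)
        calc 2 * ‖u‖⁻¹ ≤ 2 * (1 / c) := by linarith [h5]
          _ = 2 / c := by ring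

/-- McShane extension, packaged. -/
lemma extend_real_aux {X : Type*} [MetricSpace X] (A : Set X) (f : X → ℝ) {lam : ℝ}
    (hlam : 0 ≤ lam) (hf : ∀ a ∈ A, ∀ b ∈ A, dist (f a) (f b) ≤ lam * dist a b) :
    ∃ g : X → ℝ, (∀ a ∈ A, g a = f a) ∧ ∀ x y : X, dist (g x) (g y) ≤ lam * dist x y := by
  have hl : LipschitzOnWith (Real.toNNReal lam) f A := by
    rw [lipschitzOnWith_iff_dist_le_mul]
    intro x hx y hy
    rw [Real.coe_toNNReal _ hlam]
    exact hf x hx y hy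
  obtain ⟨g, hg, hgf⟩ := hl.extend_real
  refine ⟨g, fun a ha => (hgf ha).symm, fun x y => ?_⟩
  have := lipschitzWith_iff_dist_le_mul.1 hg x y
  rwa [Real.coe_toNNReal _ hlam] at this

lemma euclid_norm_sq {m : ℕ} (x : EuclideanSpace ℝ (Fin m)) : ‖x‖ ^ 2 = ∑ i, x i ^ 2 := by
  rw [EuclideanSpace.norm_eq, Real.sq_sqrt]
  · simp [Real.norm_eq_abs, sq_abs]
  · positivity

section coords
variable {n : ℕ}

/-- Append a last coordinate. -/
def snocE (u : EuclideanSpace ℝ (Fin (n+1))) (t : ℝ) : EuclideanSpace ℝ (Fin (n+2)) :=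
  WithLp.toLp 2 (Fin.snoc (α := fun _ => ℝ) (u : Fin (n+1) → ℝ) t)

/-- Forget the last coordinate. -/
def initE (v : EuclideanSpace ℝ (Fin (n+2))) : EuclideanSpace ℝ (Fin (n+1)) :=
  WithLp.toLp 2 (Fin.init (α := fun _ => ℝ) (v : Fin (n+2) → ℝ))

lemma snocE_initE (v : EuclideanSpace ℝ (Fin (n+2))) :
    snocE (initE v) (v (Fin.last (n+1))) = v := by
  ext i
  simp [snocE, initE, Fin.snoc_init_self]

lemma norm_snocE_sq (u : EuclideanSpace ℝ (Fin (n+1))) (t : ℝ) :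
    ‖snocE u t‖ ^ 2 = ‖u‖ ^ 2 + t ^ 2 := by
  rw [euclid_norm_sq (snocE u t), euclid_norm_sq u, Fin.sum_univ_castSucc]
  simp [snocE]

lemma norm_snocE_le (u : EuclideanSpace ℝ (Fin (n+1))) (t : ℝ) :
    ‖snocE u t‖ ≤ ‖u‖ + |t| := by
  have h1 : ‖snocE u t‖ ^ 2 ≤ (‖u‖ + |t|) ^ 2 := by
    rw [norm_snocE_sq]
    nlinarith [sq_abs t, mul_nonneg (norm_nonneg u) (abs_nonneg t)]
  nlinarith [norm_nonneg (snocE u t), norm_nonneg u, abs_nonneg t]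

lemma le_norm_snocE_fst (u : EuclideanSpace ℝ (Fin (n+1))) (t : ℝ) :
    ‖u‖ ≤ ‖snocE u t‖ := by
  have := norm_snocE_sq u t
  nlinarith [norm_nonneg u, norm_nonneg (snocE u t), sq_nonneg t]

lemma le_norm_snocE_snd (u : EuclideanSpace ℝ (Fin (n+1))) (t : ℝ) :
    |t| ≤ ‖snocE u t‖ := by
  have := norm_snocE_sq u t
  nlinarith [abs_nonneg t, norm_nonneg (snocE u t), sq_nonneg ‖u‖, sq_abs t]

lemma snocE_sub_snocE (u u' : EuclideanSpace ℝ (Fin (n+1))) (t t' : ℝ) :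
    snocE u t - snocE u' t' = snocE (u - u') (t - t') := by
  ext i
  rw [PiLp.sub_apply]
  refine Fin.lastCases ?_ (fun j => ?_) i
  · simp [snocE]
  · simp [snocE, PiLp.sub_apply]

lemma initE_sub (v v' : EuclideanSpace ℝ (Fin (n+2))) :
    initE v - initE v' = initE (v - v') := by
  ext j
  rw [PiLp.sub_apply]
  simp [initE, Fin.init, PiLp.sub_apply]

lemma norm_initE_le (v : EuclideanSpace ℝ (Fin (n+2))) : ‖initE v‖ ≤ ‖v‖ := by
  have h := le_norm_snocE_fst (initE v) (v (Fin.last (n+1)))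
  rwa [snocE_initE v] at h

lemma abs_last_le (v : EuclideanSpace ℝ (Fin (n+2))) : |v (Fin.last (n+1))| ≤ ‖v‖ := by
  have h := le_norm_snocE_snd (initE v) (v (Fin.last (n+1)))
  rwa [snocE_initE v] at h

lemma abs_last_sub (v v' : EuclideanSpace ℝ (Fin (n+2))) :
    |v (Fin.last (n+1)) - v' (Fin.last (n+1))| ≤ ‖v - v'‖ := by
  have h := abs_last_le (v - v')
  simpa [PiLp.sub_apply] using h

end coords

end SphereExtAux

/-- A metric space `E` is a Lipschitz extensor of `X`. -/
def LipschitzExtensorOf (X E : Type*) [MetricSpace X] [MetricSpace E] : Prop :=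
  ∃ C : ℝ, 0 < C ∧ ∀ A : Set X, A.Nonempty → ∀ lam : ℝ, 0 < lam →
    ∀ f : A → E, (∀ a b : A, dist (f a) (f b) ≤ lam * dist (a : X) (b : X)) →
      ∃ g : X → E, (∀ a : A, g a = f a) ∧
        ∀ x y : X, dist (g x) (g y) ≤ C * lam * dist x y

set_option maxHeartbeats 1600000 in
theorem sphere_succ_extensor_of_sphere_extensor
    {X : Type*} [MetricSpace X] (n : ℕ)
    (h : LipschitzExtensorOf X (Metric.sphere (0 : EuclideanSpace ℝ (Fin (n + 1))) 1)) :
    LipschitzExtensorOf X (Metric.sphere (0 : EuclideanSpace ℝ (Fin (n + 2))) 1) := by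
  classical
  obtain ⟨C0, hC0pos, hext0⟩ := h
  set C : ℝ := max C0 1 with hCdef
  have hC1 : (1:ℝ) ≤ C := le_max_right _ _
  have hCpos : (0:ℝ) < C := lt_of_lt_of_le one_pos hC1
  -- extension property with the constant C
  have hext : ∀ D : Set X, D.Nonempty → ∀ L : ℝ, 0 < L →
      ∀ φ : D → Metric.sphere (0 : EuclideanSpace ℝ (Fin (n+1))) 1,
      (∀ a b : D, dist (φ a) (φ b) ≤ L * dist (a : X) (b : X)) →
      ∃ g : X → Metric.sphere (0 : EuclideanSpace ℝ (Fin (n+1))) 1,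
        (∀ a : D, g a = φ a) ∧ ∀ x y : X, dist (g x) (g y) ≤ C * L * dist x y := by
    intro D hD L hL φ hφ
    obtain ⟨g, hg1, hg2⟩ := hext0 D hD L hL φ hφ
    refine ⟨g, hg1, fun x y => (hg2 x y).trans ?_⟩
    have h1 : C0 * L ≤ C * L := mul_le_mul_of_nonneg_right (le_max_left _ _) hL.le
    exact mul_le_mul_of_nonneg_right h1 dist_nonneg
  set ε : ℝ := min (1/2) C⁻¹ with hεdef
  have hεpos : 0 < ε := lt_min (by norm_num) (inv_pos.2 hCpos)
  have hεhalf : ε ≤ 1/2 := min_le_left _ _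
  have hεlt1 : ε < 1 := lt_of_le_of_lt hεhalf (by norm_num)
  have hεC : C * ε ≤ 1 := by
    have h1 : ε ≤ C⁻¹ := min_le_right _ _
    calc C * ε ≤ C * C⁻¹ := by nlinarith
      _ = 1 := mul_inv_cancel₀ (ne_of_gt hCpos)
  have hεbig : (2*C)⁻¹ ≤ ε := by
    apply le_min
    · rw [one_div]
      exact inv_anti₀ (by norm_num) (by linarith)
    · exact inv_anti₀ hCpos (by linarith)
  have hCε : 1 ≤ 2*C*ε := by
    have h2 : (2*C) * (2*C)⁻¹ ≤ 2*C*ε := by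
      apply mul_le_mul_of_nonneg_left hεbig (by positivity)
    rwa [mul_inv_cancel₀ (by positivity)] at h2
  have pow_succ_le : ∀ k : ℕ, ε^(k+1) ≤ ε^k := by
    intro k
    rw [pow_succ]
    exact mul_le_of_le_one_right (pow_nonneg hεpos.le k) hεlt1.le
  -- unit vector in the smaller space
  obtain ⟨e1pt, he1⟩ : ∃ u : EuclideanSpace ℝ (Fin (n+1)), ‖u‖ = 1 :=
    ⟨EuclideanSpace.single 0 1, by rw [EuclideanSpace.norm_single]; norm_num⟩
  refine ⟨8 * (2 + 32 * C^3), by positivity, ?_⟩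
  intro A hA lam hlam f hf
  have sph_norm2 : ∀ z : Metric.sphere (0 : EuclideanSpace ℝ (Fin (n+2))) 1,
      ‖(z : EuclideanSpace ℝ (Fin (n+2)))‖ = 1 := fun z => mem_sphere_zero_iff_norm.1 z.2
  have hfd : ∀ a b : A, ‖(f a : EuclideanSpace ℝ (Fin (n+2))) - (f b : EuclideanSpace ℝ (Fin (n+2)))‖
      ≤ lam * dist (a : X) (b : X) := by
    intro a b
    have := hf a b
    rwa [Subtype.dist_eq, dist_eq_norm] at this
  -- basic facts about the coordinates of f
  have hfact : ∀ a : A, ‖initE (f a : EuclideanSpace ℝ (Fin (n+2)))‖ ≤ 1 ∧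
      |(f a : EuclideanSpace ℝ (Fin (n+2))) (Fin.last (n+1))| ≤ 1 ∧
      ‖initE (f a : EuclideanSpace ℝ (Fin (n+2)))‖^2
        + ((f a : EuclideanSpace ℝ (Fin (n+2))) (Fin.last (n+1)))^2 = 1 := by
    intro a
    have h1 : ‖initE (f a : EuclideanSpace ℝ (Fin (n+2)))‖ ≤ 1 :=
      (norm_initE_le _).trans (le_of_eq (sph_norm2 (f a)))
    have h2 : |(f a : EuclideanSpace ℝ (Fin (n+2))) (Fin.last (n+1))| ≤ 1 :=
      (abs_last_le _).trans (le_of_eq (sph_norm2 (f a)))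
    have h3 : ‖initE (f a : EuclideanSpace ℝ (Fin (n+2)))‖^2
        + ((f a : EuclideanSpace ℝ (Fin (n+2))) (Fin.last (n+1)))^2 = 1 := by
      have := norm_snocE_sq (initE (f a : EuclideanSpace ℝ (Fin (n+2))))
        ((f a : EuclideanSpace ℝ (Fin (n+2))) (Fin.last (n+1)))
      rw [snocE_initE, sph_norm2 (f a)] at this
      rw [← this]
      norm_num
    exact ⟨h1, h2, h3⟩
  -- extend the last coordinate
  obtain ⟨T, hTeq, hTlip, hTle⟩ : ∃ T : X → ℝ,
      (∀ a : A, T (a : X) = (f a : EuclideanSpace ℝ (Fin (n+2))) (Fin.last (n+1))) ∧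
      (∀ x y : X, |T x - T y| ≤ lam * dist x y) ∧ (∀ x : X, |T x| ≤ 1) := by
    have hbnd : ∀ a ∈ A, ∀ b ∈ A, dist
        ((fun x => if hx : x ∈ A then (f ⟨x, hx⟩ : EuclideanSpace ℝ (Fin (n+2))) (Fin.last (n+1)) else 0) a)
        ((fun x => if hx : x ∈ A then (f ⟨x, hx⟩ : EuclideanSpace ℝ (Fin (n+2))) (Fin.last (n+1)) else 0) b)
        ≤ lam * dist a b := by
      intro a ha b hb
      beta_reduce
      rw [dif_pos ha, dif_pos hb, Real.dist_eq]
      have := abs_last_sub (f ⟨a, ha⟩ : EuclideanSpace ℝ (Fin (n+2)))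
        (f ⟨b, hb⟩ : EuclideanSpace ℝ (Fin (n+2)))
      exact this.trans (hfd ⟨a, ha⟩ ⟨b, hb⟩)
    obtain ⟨T0, hT01, hT02⟩ := extend_real_aux A
      (fun x => if hx : x ∈ A then (f ⟨x, hx⟩ : EuclideanSpace ℝ (Fin (n+2))) (Fin.last (n+1)) else 0)
      hlam.le hbnd
    refine ⟨fun x => max (-1) (min 1 (T0 x)), ?_, ?_, ?_⟩
    · intro a
      beta_reduce
      have h1 : T0 (a : X) = (f a : EuclideanSpace ℝ (Fin (n+2))) (Fin.last (n+1)) := by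
        rw [hT01 _ a.2, dif_pos a.2, Subtype.coe_eta]
      rw [h1]
      have h2 := (hfact a).2.1
      rw [min_eq_right (by have := abs_le.1 h2; linarith [this.1, this.2]),
        max_eq_right (by have := abs_le.1 h2; linarith [this.1, this.2])]
    · intro x y
      beta_reduce
      have h1 : |min 1 (T0 x) - min 1 (T0 y)| ≤ |T0 x - T0 y| := by
        have := abs_min_sub_min_le_max 1 (T0 x) 1 (T0 y)
        rwa [sub_self, abs_zero, max_eq_right (abs_nonneg (T0 x - T0 y))] at this
      have h2 : |max (-1) (min 1 (T0 x)) - max (-1) (min 1 (T0 y))|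
          ≤ |min 1 (T0 x) - min 1 (T0 y)| := by
        have := abs_max_sub_max_le_max (-1) (min 1 (T0 x)) (-1) (min 1 (T0 y))
        rwa [sub_self, abs_zero,
          max_eq_right (abs_nonneg (min 1 (T0 x) - min 1 (T0 y)))] at this
      have h3 := hT02 x y
      rw [Real.dist_eq] at h3
      exact h2.trans (h1.trans h3)
    · intro x
      beta_reduce
      rw [abs_le]
      constructor
      · exact le_max_left _ _
      · exact max_le (by norm_num) (min_le_left _ _)
  -- extend the radius coordinate (with the safety floor 1/2 - |T|)
  obtain ⟨R, hReq, hRlip, hR0, hR1, hRfl⟩ : ∃ R : X → ℝ,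
      (∀ a : A, R (a : X) = ‖initE (f a : EuclideanSpace ℝ (Fin (n+2)))‖) ∧
      (∀ x y : X, |R x - R y| ≤ lam * dist x y) ∧ (∀ x : X, 0 ≤ R x) ∧ (∀ x : X, R x ≤ 1) ∧
      (∀ x : X, 1/2 - |T x| ≤ R x) := by
    have hbnd : ∀ a ∈ A, ∀ b ∈ A, dist
        ((fun x => if hx : x ∈ A then ‖initE (f ⟨x, hx⟩ : EuclideanSpace ℝ (Fin (n+2)))‖ else 0) a)
        ((fun x => if hx : x ∈ A then ‖initE (f ⟨x, hx⟩ : EuclideanSpace ℝ (Fin (n+2)))‖ else 0) b)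
        ≤ lam * dist a b := by
      intro a ha b hb
      beta_reduce
      rw [dif_pos ha, dif_pos hb, Real.dist_eq]
      have h1 := abs_norm_sub_norm_le (initE (f ⟨a, ha⟩ : EuclideanSpace ℝ (Fin (n+2))))
        (initE (f ⟨b, hb⟩ : EuclideanSpace ℝ (Fin (n+2))))
      rw [initE_sub] at h1
      exact h1.trans ((norm_initE_le _).trans (hfd ⟨a, ha⟩ ⟨b, hb⟩))
    obtain ⟨R0, hR01, hR02⟩ := extend_real_aux A
      (fun x => if hx : x ∈ A then ‖initE (f ⟨x, hx⟩ : EuclideanSpace ℝ (Fin (n+2)))‖ else 0)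
      hlam.le hbnd
    refine ⟨fun x => max (max 0 (min 1 (R0 x))) (1/2 - |T x|), ?_, ?_, ?_, ?_, ?_⟩
    · intro a
      beta_reduce
      have h1 : R0 (a : X) = ‖initE (f a : EuclideanSpace ℝ (Fin (n+2)))‖ := by
        rw [hR01 _ a.2, dif_pos a.2, Subtype.coe_eta]
      obtain ⟨ha1, ha2, ha3⟩ := hfact a
      have h2 : max 0 (min 1 (R0 (a:X))) = ‖initE (f a : EuclideanSpace ℝ (Fin (n+2)))‖ := by
        rw [h1, min_eq_right ha1, max_eq_right (norm_nonneg _)]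
      rw [h2, hTeq a]
      apply max_eq_left
      -- 1/2 - |t| ≤ r  since  r + |t| ≥ r² + t² = 1 ≥ 1/2
      have h3 : ((f a : EuclideanSpace ℝ (Fin (n+2))) (Fin.last (n+1)))^2
          ≤ |(f a : EuclideanSpace ℝ (Fin (n+2))) (Fin.last (n+1))| := by
        nlinarith [abs_nonneg ((f a : EuclideanSpace ℝ (Fin (n+2))) (Fin.last (n+1))), sq_abs ((f a : EuclideanSpace ℝ (Fin (n+2))) (Fin.last (n+1)))]
      nlinarith [norm_nonneg (initE (f a : EuclideanSpace ℝ (Fin (n+2))))]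
    · intro x y
      beta_reduce
      have h1 : |min 1 (R0 x) - min 1 (R0 y)| ≤ |R0 x - R0 y| := by
        have := abs_min_sub_min_le_max 1 (R0 x) 1 (R0 y)
        rwa [sub_self, abs_zero, max_eq_right (abs_nonneg (R0 x - R0 y))] at this
      have h2 : |max 0 (min 1 (R0 x)) - max 0 (min 1 (R0 y))|
          ≤ |min 1 (R0 x) - min 1 (R0 y)| := by
        have := abs_max_sub_max_le_max 0 (min 1 (R0 x)) 0 (min 1 (R0 y))
        rwa [sub_self, abs_zero,
          max_eq_right (abs_nonneg (min 1 (R0 x) - min 1 (R0 y)))] at this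
      have h3 := hR02 x y
      rw [Real.dist_eq] at h3
      have h4 : |max 0 (min 1 (R0 x)) - max 0 (min 1 (R0 y))| ≤ lam * dist x y :=
        h2.trans (h1.trans h3)
      have h5 : |(1/2 - |T x|) - (1/2 - |T y|)| ≤ lam * dist x y := by
        have h6 : |(1/2 - |T x|) - (1/2 - |T y|)| = |(|T y| - |T x|)| := by
          congr 1; ring
        rw [h6]
        have h7 : |(|T y| - |T x|)| ≤ |T y - T x| := abs_abs_sub_abs_le_abs_sub _ _
        have h8 := hTlip y x
        rw [dist_comm] at h8
        exact h7.trans h8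
      have := abs_max_sub_max_le_max (max 0 (min 1 (R0 x))) (1/2 - |T x|)
        (max 0 (min 1 (R0 y))) (1/2 - |T y|)
      exact this.trans (max_le h4 h5)
    · intro x
      beta_reduce
      exact le_trans (le_max_left _ _) (le_max_left _ _)
    · intro x
      beta_reduce
      exact max_le (max_le (by norm_num) (min_le_left _ _)) (by linarith [abs_nonneg (T x)])
    · intro x
      beta_reduce
      exact le_max_right _ _
  -- the direction field on A
  obtain ⟨ω, hωnorm, hωw, hωlip⟩ : ∃ ω : X → EuclideanSpace ℝ (Fin (n+1)),
      (∀ x : X, ‖ω x‖ = 1) ∧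
      (∀ a : A, R (a : X) • ω (a : X) = initE (f a : EuclideanSpace ℝ (Fin (n+2)))) ∧
      (∀ x y : X, x ∈ A → y ∈ A → ∀ s : ℝ, 0 < s → s ≤ R x → s ≤ R y →
        ‖ω x - ω y‖ ≤ 2 / s * (lam * dist x y)) := by
    refine ⟨fun x => if hx : x ∈ A then
        (if hr : ‖initE (f ⟨x, hx⟩ : EuclideanSpace ℝ (Fin (n+2)))‖ = 0 then e1pt
          else ‖initE (f ⟨x, hx⟩ : EuclideanSpace ℝ (Fin (n+2)))‖⁻¹
            • initE (f ⟨x, hx⟩ : EuclideanSpace ℝ (Fin (n+2)))) else e1pt, ?_, ?_, ?_⟩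
    · intro x
      beta_reduce
      by_cases hx : x ∈ A
      · rw [dif_pos hx]
        by_cases hr : ‖initE (f ⟨x, hx⟩ : EuclideanSpace ℝ (Fin (n+2)))‖ = 0
        · rw [dif_pos hr]; exact he1
        · rw [dif_neg hr, norm_smul, Real.norm_eq_abs,
            abs_of_nonneg (inv_nonneg.2 (norm_nonneg _)), inv_mul_cancel₀ hr]
      · rw [dif_neg hx]; exact he1
    · intro a
      beta_reduce
      rw [dif_pos a.2]
      by_cases hr : ‖initE (f ⟨(a:X), a.2⟩ : EuclideanSpace ℝ (Fin (n+2)))‖ = 0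
      · rw [dif_pos hr]
        have h1 : initE (f a : EuclideanSpace ℝ (Fin (n+2))) = 0 := by
          rw [← norm_eq_zero]
          rw [Subtype.coe_eta] at hr
          exact hr
        rw [h1, hReq a, h1, norm_zero, zero_smul]
      · rw [dif_neg hr, Subtype.coe_eta, hReq a, smul_smul,
          mul_inv_cancel₀ (by rw [Subtype.coe_eta] at hr; exact hr), one_smul]
    · intro x y hx hy s hs hsx hsy
      have hRx : R x = ‖initE (f ⟨x, hx⟩ : EuclideanSpace ℝ (Fin (n+2)))‖ := hReq ⟨x, hx⟩
      have hRy : R y = ‖initE (f ⟨y, hy⟩ : EuclideanSpace ℝ (Fin (n+2)))‖ := hReq ⟨y, hy⟩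
      have hrx : ‖initE (f ⟨x, hx⟩ : EuclideanSpace ℝ (Fin (n+2)))‖ ≠ 0 := by
        rw [← hRx]; exact ne_of_gt (lt_of_lt_of_le hs hsx)
      have hry : ‖initE (f ⟨y, hy⟩ : EuclideanSpace ℝ (Fin (n+2)))‖ ≠ 0 := by
        rw [← hRy]; exact ne_of_gt (lt_of_lt_of_le hs hsy)
      beta_reduce
      rw [dif_pos hx, dif_pos hy, dif_neg hrx, dif_neg hry]
      have h1 := normalize_sub_le (u := initE (f ⟨x, hx⟩ : EuclideanSpace ℝ (Fin (n+2))))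
        (v := initE (f ⟨y, hy⟩ : EuclideanSpace ℝ (Fin (n+2)))) hs (by rw [← hRx]; exact hsx)
        (by rw [← hRy]; exact hsy)
      refine h1.trans ?_
      apply mul_le_mul_of_nonneg_left _ (by positivity)
      rw [initE_sub]
      exact (norm_initE_le _).trans (hfd ⟨x, hx⟩ ⟨y, hy⟩)
  -- helper: extend unit-vector valued maps from a subset
  have ext_step : ∀ (D : Set X) (u : X → EuclideanSpace ℝ (Fin (n+1))) (L : ℝ), 0 < L →
      (∀ x : X, ‖u x‖ = 1) → (∀ x ∈ D, ∀ y ∈ D, ‖u x - u y‖ ≤ L * dist x y) →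
      ∃ v : X → EuclideanSpace ℝ (Fin (n+1)), (∀ x : X, ‖v x‖ = 1) ∧
        (∀ x y : X, ‖v x - v y‖ ≤ C * L * dist x y) ∧ ∀ x ∈ D, v x = u x := by
    intro D u L hL hu hD2
    by_cases hD : D.Nonempty
    · have hφ : ∀ a b : D,
          dist (⟨u a, mem_sphere_zero_iff_norm.2 (hu a)⟩ :
              Metric.sphere (0 : EuclideanSpace ℝ (Fin (n+1))) 1)
            (⟨u b, mem_sphere_zero_iff_norm.2 (hu b)⟩ :
              Metric.sphere (0 : EuclideanSpace ℝ (Fin (n+1))) 1)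
          ≤ L * dist (a : X) (b : X) := by
        intro a b
        rw [Subtype.dist_eq, dist_eq_norm]
        exact hD2 a a.2 b b.2
      obtain ⟨g, hg1, hg2⟩ := hext D hD L hL
        (fun z => ⟨u z, mem_sphere_zero_iff_norm.2 (hu z)⟩) hφ
      refine ⟨fun x => (g x : EuclideanSpace ℝ (Fin (n+1))),
        fun x => mem_sphere_zero_iff_norm.1 (g x).2, fun x y => ?_, fun x hx => ?_⟩
      · have := hg2 x y
        rwa [Subtype.dist_eq, dist_eq_norm] at this
      · exact congrArg Subtype.val (hg1 ⟨x, hx⟩)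
    · refine ⟨fun _ => e1pt, fun _ => he1, fun x y => ?_, fun x hx => absurd ⟨x, hx⟩ hD⟩
      rw [sub_self, norm_zero]
      positivity
  -- the base direction field
  have base : ∃ Ω : X → EuclideanSpace ℝ (Fin (n+1)), (∀ x, ‖Ω x‖ = 1) ∧
      (∀ x y : X, ‖Ω x - Ω y‖ ≤ 8*C*lam/ε^(0+1) * dist x y) ∧
      (∀ x : X, x ∈ A → ε^(0+1)/2 ≤ R x → Ω x = ω x) := by
    have hpair : ∀ x ∈ A ∩ {x | ε/2 ≤ R x}, ∀ y ∈ A ∩ {x | ε/2 ≤ R x},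
        ‖ω x - ω y‖ ≤ 4*lam/ε * dist x y := by
      intro x hx y hy
      have h1 := hωlip x y hx.1 hy.1 (ε/2) (by positivity) hx.2 hy.2
      have h2 : 2/(ε/2) * (lam * dist x y) = 4*lam/ε * dist x y := by
        field_simp
        ring
      exact h1.trans h2.le
    obtain ⟨v, hv1, hv2, hv3⟩ := ext_step (A ∩ {x | ε/2 ≤ R x}) ω (4*lam/ε)
      (by positivity) hωnorm hpair
    refine ⟨v, hv1, fun x y => (hv2 x y).trans ?_, fun x hx hr => hv3 x ⟨hx, ?_⟩⟩
    · apply mul_le_mul_of_nonneg_right _ dist_nonneg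
      have heq : 8*C*lam/ε^(0+1) - C*(4*lam/ε) = 4*(C*lam)/ε := by
        ring
      linarith [div_nonneg (by positivity : (0:ℝ) ≤ 4*(C*lam)) hεpos.le]
    · show ε/2 ≤ R x
      rw [pow_one] at hr
      exact hr
  -- the inductive step
  have step : ∀ (k : ℕ) (Ω : X → EuclideanSpace ℝ (Fin (n+1))),
      (∀ x, ‖Ω x‖ = 1) →
      (∀ x y : X, ‖Ω x - Ω y‖ ≤ 8*C*lam/ε^(k+1) * dist x y) →
      (∀ x : X, x ∈ A → ε^(k+1)/2 ≤ R x → Ω x = ω x) →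
      ∃ Ω' : X → EuclideanSpace ℝ (Fin (n+1)), (∀ x, ‖Ω' x‖ = 1) ∧
        (∀ x y : X, ‖Ω' x - Ω' y‖ ≤ 8*C*lam/ε^(k+2) * dist x y) ∧
        (∀ x : X, x ∈ A → ε^(k+2)/2 ≤ R x → Ω' x = ω x) ∧
        (∀ x : X, ε^k ≤ R x → Ω' x = Ω x) := by
    intro k Ω hΩ1 hΩ2 hΩ3
    set u : X → EuclideanSpace ℝ (Fin (n+1)) :=
      fun x => if ε^k ≤ R x then Ω x else ω x with hudef
    have hu1 : ∀ x : X, ‖u x‖ = 1 := by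
      intro x
      show ‖if ε^k ≤ R x then Ω x else ω x‖ = 1
      split_ifs with h1
      · exact hΩ1 x
      · exact hωnorm x
    have hΩΩ : ∀ x y : X, ‖Ω x - Ω y‖ ≤ 8*lam/ε^(k+2) * dist x y := by
      intro x y
      refine (hΩ2 x y).trans ?_
      apply mul_le_mul_of_nonneg_right _ dist_nonneg
      rw [div_le_div_iff₀ (by positivity) (by positivity)]
      have he : ε^(k+2) = ε^(k+1) * ε := by ring
      rw [he]
      nlinarith [hεC, pow_pos hεpos (k+1), hlam, mul_pos hlam (pow_pos hεpos (k+1))]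
    have mixed : ∀ x y : X, ε^k ≤ R x → y ∈ A → ε^(k+2)/2 ≤ R y → ¬(ε^k ≤ R y) →
        ‖u x - u y‖ ≤ 8*lam/ε^(k+2) * dist x y := by
      intro x y h1 hyA hyR h2
      have hux : u x = Ω x := if_pos h1
      have huy : u y = ω y := if_neg h2
      by_cases h3 : ε^(k+1)/2 ≤ R y
      · rw [hux, huy, ← hΩ3 y hyA h3]
        exact hΩΩ x y
      · have h5 : ε^(k+1) ≤ ε^k := pow_succ_le k
        have h6 : ε^k/2 ≤ lam * dist x y := by
          have h7 := hRlip x y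
          have h8 := le_abs_self (R x - R y)
          have h9 : R y < ε^(k+1)/2 := lt_of_not_ge h3
          linarith
        have h10 : ‖u x - u y‖ ≤ 2 := by
          refine (norm_sub_le _ _).trans ?_
          rw [hu1 x, hu1 y]
          norm_num
        refine h10.trans ?_
        rw [div_mul_eq_mul_div, le_div_iff₀ (by positivity)]
        have he : ε^(k+2) = ε^k * ε^2 := by ring
        rw [he]
        have hd0 : 0 ≤ lam * dist x y := by positivity
        have hε2 : ε^2 ≤ 1/4 := by nlinarith [hεhalf, hεpos]
        calc 2 * (ε^k * ε^2) ≤ 2 * (ε^k * (1/4)) := by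
              have := mul_le_mul_of_nonneg_left hε2 (pow_nonneg hεpos.le k)
              linarith
          _ = ε^k/2 := by ring
          _ ≤ lam * dist x y := h6
          _ ≤ 8 * lam * dist x y := by linarith [hd0]
    have hpair : ∀ x ∈ {x : X | ε^k ≤ R x} ∪ (A ∩ {x | ε^(k+2)/2 ≤ R x}),
        ∀ y ∈ {x : X | ε^k ≤ R x} ∪ (A ∩ {x | ε^(k+2)/2 ≤ R x}),
        ‖u x - u y‖ ≤ 8*lam/ε^(k+2) * dist x y := by
      intro x hx y hy
      by_cases h1 : ε^k ≤ R x <;> by_cases h2 : ε^k ≤ R y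
      · have hux : u x = Ω x := if_pos h1
        have huy : u y = Ω y := if_pos h2
        rw [hux, huy]
        exact hΩΩ x y
      · rcases hy with hy | hy
        · exact absurd hy h2
        · exact mixed x y h1 hy.1 hy.2 h2
      · rcases hx with hx | hx
        · exact absurd hx h1
        · rw [norm_sub_rev, dist_comm]
          exact mixed y x h2 hx.1 hx.2 h1
      · rcases hx with hx | hx
        · exact absurd hx h1
        rcases hy with hy | hy
        · exact absurd hy h2
        have hux : u x = ω x := if_neg h1
        have huy : u y = ω y := if_neg h2
        rw [hux, huy]
        have h4 := hωlip x y hx.1 hy.1 (ε^(k+2)/2) (by positivity) hx.2 hy.2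
        refine h4.trans ?_
        have h5 : 2/(ε^(k+2)/2) * (lam * dist x y) = 4*lam/ε^(k+2) * dist x y := by
          field_simp
          ring
        rw [h5]
        have heq : 8*lam/ε^(k+2) * dist x y - 4*lam/ε^(k+2)*dist x y
            = 4*lam*dist x y/ε^(k+2) := by ring
        linarith [div_nonneg (by positivity : (0:ℝ) ≤ 4*lam*dist x y)
          (pow_pos hεpos (k+2)).le]
    obtain ⟨v, hv1, hv2, hv3⟩ := ext_step _ u (8*lam/ε^(k+2)) (by positivity) hu1 hpair
    refine ⟨v, hv1, fun x y => (hv2 x y).trans (le_of_eq (by ring)), ?_, ?_⟩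
    · intro x hxA hxR
      rw [hv3 x (Or.inr ⟨hxA, hxR⟩)]
      by_cases h1 : ε^k ≤ R x
      · have hux : u x = Ω x := if_pos h1
        rw [hux]
        refine hΩ3 x hxA ?_
        have := pow_succ_le k
        linarith [pow_pos hεpos (k+1)]
      · exact if_neg h1
    · intro x hxR
      rw [hv3 x (Or.inl hxR)]
      exact if_pos hxR
  obtain ⟨Ω0, hΩ01, hΩ02, hΩ03⟩ := base
  choose nextΩ hnext1 hnext2 hnext3 hnext4 using step
  -- the chain of direction fields at all scales
  let c : ∀ k : ℕ, {Ω : X → EuclideanSpace ℝ (Fin (n+1)) //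
      (∀ x, ‖Ω x‖ = 1) ∧ (∀ x y : X, ‖Ω x - Ω y‖ ≤ 8*C*lam/ε^(k+1) * dist x y) ∧
      (∀ x : X, x ∈ A → ε^(k+1)/2 ≤ R x → Ω x = ω x)} := fun k =>
    Nat.rec ⟨Ω0, hΩ01, hΩ02, hΩ03⟩
      (fun k ih => ⟨nextΩ k ih.1 ih.2.1 ih.2.2.1 ih.2.2.2,
        hnext1 k ih.1 ih.2.1 ih.2.2.1 ih.2.2.2,
        hnext2 k ih.1 ih.2.1 ih.2.2.1 ih.2.2.2,
        hnext3 k ih.1 ih.2.1 ih.2.2.1 ih.2.2.2⟩) k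
  have hc1 : ∀ (k : ℕ) (x : X), ‖(c k).1 x‖ = 1 := fun k => (c k).2.1
  have hc2 : ∀ (k : ℕ) (x y : X), ‖(c k).1 x - (c k).1 y‖ ≤ 8*C*lam/ε^(k+1) * dist x y :=
    fun k => (c k).2.2.1
  have hc3 : ∀ (k : ℕ) (x : X), x ∈ A → ε^(k+1)/2 ≤ R x → (c k).1 x = ω x :=
    fun k => (c k).2.2.2
  have hcsucc : ∀ (k : ℕ) (x : X), ε^k ≤ R x → (c (k+1)).1 x = (c k).1 x := by
    intro k x hx
    exact hnext4 k (c k).1 (c k).2.1 (c k).2.2.1 (c k).2.2.2 x hx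
  have hmono : ∀ j k : ℕ, j ≤ k → ∀ x : X, ε^j ≤ R x → (c k).1 x = (c j).1 x := by
    intro j k hjk
    induction k, hjk using Nat.le_induction with
    | base => intro x _; rfl
    | succ k hk ih =>
      intro x hx
      have hk' : ε^k ≤ R x :=
        le_trans (pow_le_pow_of_le_one hεpos.le hεlt1.le hk) hx
      rw [hcsucc k x hk', ih x hx]
  have exU : ∀ {x : X}, 0 < R x → ∃ k : ℕ, ε^k ≤ R x := by
    intro x hx
    obtain ⟨k, hk⟩ := exists_pow_lt_of_lt_one hx hεlt1
    exact ⟨k, hk.le⟩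
  obtain ⟨Ω, hΩnorm1, hΩchain⟩ : ∃ Ω : X → EuclideanSpace ℝ (Fin (n+1)),
      (∀ x : X, ‖Ω x‖ = 1) ∧
      (∀ (k : ℕ) (x : X) (hx : 0 < R x), ε^k ≤ R x → Ω x = (c k).1 x) := by
    refine ⟨fun x => if hx : 0 < R x then (c (Nat.find (exU hx))).1 x else e1pt, ?_, ?_⟩
    · intro x
      beta_reduce
      split_ifs with hx
      · exact hc1 _ x
      · exact he1
    · intro k x hx hk
      beta_reduce
      rw [dif_pos hx]
      exact (hmono (Nat.find (exU hx)) k (Nat.find_le hk) x (Nat.find_spec (exU hx))).symm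
  have hΩch : ∀ (k : ℕ) (x : X), ε^k ≤ R x → Ω x = (c k).1 x := by
    intro k x hk
    exact hΩchain k x (lt_of_lt_of_le (pow_pos hεpos k) hk) hk
  have find_bound : ∀ {x : X} (hx : 0 < R x), R x ≤ 4*C^2*ε^(Nat.find (exU hx)+1) := by
    intro x hx
    by_cases h0 : Nat.find (exU hx) = 0
    · rw [h0, pow_one]
      have h1 : (2*C) * 1 ≤ (2*C) * (2*C*ε) :=
        mul_le_mul_of_nonneg_left hCε (by positivity)
      nlinarith [hR1 x, hC1]
    · obtain ⟨j, hj⟩ : ∃ j, Nat.find (exU hx) = j+1 :=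
        ⟨Nat.find (exU hx) - 1, (Nat.succ_pred_eq_of_pos (Nat.pos_of_ne_zero h0)).symm⟩
      have hmin : ¬ ε^j ≤ R x := Nat.find_min (exU hx) (by omega)
      rw [hj]
      have h4 : 1 ≤ 4*C^2*ε^2 := by nlinarith [hCε, sq_nonneg (2*C*ε - 1)]
      have h5 : ε^j * 1 ≤ ε^j * (4*C^2*ε^2) :=
        mul_le_mul_of_nonneg_left h4 (pow_pos hεpos j).le
      calc R x ≤ ε^j := (not_le.1 hmin).le
        _ = ε^j * 1 := by ring
        _ ≤ ε^j * (4*C^2*ε^2) := h5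
        _ = 4*C^2*ε^(j+1+1) := by ring
  -- Lipschitz bound for the weighted direction field
  have hWhalf : ∀ x y : X, R y ≤ R x →
      ‖R x • Ω x - R y • Ω y‖ ≤ (1 + 32*C^3) * lam * dist x y := by
    intro x y hxy
    have hdecomp : R x • Ω x - R y • Ω y = (R x - R y) • Ω x + R y • (Ω x - Ω y) := by
      rw [sub_smul, smul_sub]
      abel
    rw [hdecomp]
    have hb1 : ‖(R x - R y) • Ω x‖ ≤ lam * dist x y := by
      rw [norm_smul, Real.norm_eq_abs, hΩnorm1 x, mul_one]
      exact hRlip x y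
    have hb2 : ‖R y • (Ω x - Ω y)‖ ≤ 32*C^3*lam * dist x y := by
      rw [norm_smul, Real.norm_eq_abs, abs_of_nonneg (hR0 y)]
      by_cases hy : 0 < R y
      · have hk1 : ε^(Nat.find (exU hy)) ≤ R y := Nat.find_spec (exU hy)
        have hk2 := find_bound hy
        have hx1 : Ω x = (c (Nat.find (exU hy))).1 x := hΩch _ x (hk1.trans hxy)
        have hy1 : Ω y = (c (Nat.find (exU hy))).1 y := hΩch _ y hk1
        rw [hx1, hy1]
        have h2 := hc2 (Nat.find (exU hy)) x y
        have h3 := mul_le_mul hk2 h2 (norm_nonneg _) (by positivity)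
        refine h3.trans (le_of_eq ?_)
        have hne : ε^(Nat.find (exU hy)+1) ≠ 0 := ne_of_gt (pow_pos hεpos _)
        field_simp
        ring
      · have h0 : R y = 0 := le_antisymm (not_lt.1 hy) (hR0 y)
        rw [h0, zero_mul]
        positivity
    calc ‖(R x - R y) • Ω x + R y • (Ω x - Ω y)‖
        ≤ ‖(R x - R y) • Ω x‖ + ‖R y • (Ω x - Ω y)‖ := norm_add_le _ _
      _ ≤ lam * dist x y + 32*C^3*lam * dist x y := add_le_add hb1 hb2
      _ = (1 + 32*C^3) * lam * dist x y := by ring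
  have hWlip : ∀ x y : X, ‖R x • Ω x - R y • Ω y‖ ≤ (1 + 32*C^3) * lam * dist x y := by
    intro x y
    rcases le_total (R y) (R x) with hc' | hc'
    · exact hWhalf x y hc'
    · rw [norm_sub_rev, dist_comm]
      exact hWhalf y x hc'
  -- the weighted direction matches f on A
  have hWA : ∀ a : A, R (a:X) • Ω (a:X) = initE (f a : EuclideanSpace ℝ (Fin (n+2))) := by
    intro a
    by_cases hra : 0 < R (a:X)
    · have h1 : Ω (a:X) = ω (a:X) := by
        obtain ⟨k, hk⟩ := exU hra
        rw [hΩch k _ hk]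
        refine hc3 k _ a.2 ?_
        have := pow_succ_le k
        linarith [pow_pos hεpos (k+1)]
      rw [h1]
      exact hωw a
    · have h0 : R (a:X) = 0 := le_antisymm (not_lt.1 hra) (hR0 _)
      rw [h0, zero_smul]
      have h2 : ‖initE (f a : EuclideanSpace ℝ (Fin (n+2)))‖ = 0 := by
        rw [← hReq a, h0]
      exact (norm_eq_zero.1 h2).symm
  -- assemble the final map
  have hGnorm_lb : ∀ x : X, (1:ℝ)/4 ≤ ‖snocE (R x • Ω x) (T x)‖ := by
    intro x
    by_cases ht : 1/4 ≤ |T x|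
    · exact ht.trans (le_norm_snocE_snd _ _)
    · have h2 : 1/4 ≤ R x := by
        have h3 := hRfl x
        linarith [not_le.1 ht]
      have h3 : ‖R x • Ω x‖ = R x := by
        rw [norm_smul, Real.norm_eq_abs, abs_of_nonneg (hR0 x), hΩnorm1 x, mul_one]
      calc (1:ℝ)/4 ≤ R x := h2
        _ = ‖R x • Ω x‖ := h3.symm
        _ ≤ ‖snocE (R x • Ω x) (T x)‖ := le_norm_snocE_fst _ _
  have hGpos : ∀ x : X, 0 < ‖snocE (R x • Ω x) (T x)‖ :=
    fun x => lt_of_lt_of_le (by norm_num) (hGnorm_lb x)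
  have hGA : ∀ a : A,
      snocE (R (a:X) • Ω (a:X)) (T (a:X)) = (f a : EuclideanSpace ℝ (Fin (n+2))) := by
    intro a
    rw [hWA a, hTeq a]
    exact snocE_initE _
  have hGlip : ∀ x y : X, ‖snocE (R x • Ω x) (T x) - snocE (R y • Ω y) (T y)‖
      ≤ (2 + 32*C^3) * lam * dist x y := by
    intro x y
    rw [snocE_sub_snocE]
    refine (norm_snocE_le _ _).trans ?_
    calc ‖R x • Ω x - R y • Ω y‖ + |T x - T y|
        ≤ (1 + 32*C^3) * lam * dist x y + lam * dist x y :=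
          add_le_add (hWlip x y) (hTlip x y)
      _ = (2 + 32*C^3) * lam * dist x y := by ring
  refine ⟨fun x => ⟨‖snocE (R x • Ω x) (T x)‖⁻¹ • snocE (R x • Ω x) (T x),
    mem_sphere_zero_iff_norm.2 (by
      rw [norm_smul, Real.norm_eq_abs, abs_of_nonneg (inv_nonneg.2 (norm_nonneg _)),
        inv_mul_cancel₀ (ne_of_gt (hGpos x))])⟩, ?_, ?_⟩
  · intro a
    apply Subtype.ext
    show ‖snocE (R (a:X) • Ω (a:X)) (T (a:X))‖⁻¹ • snocE (R (a:X) • Ω (a:X)) (T (a:X))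
      = (f a : EuclideanSpace ℝ (Fin (n+2)))
    rw [hGA a, sph_norm2 (f a), inv_one, one_smul]
  · intro x y
    rw [Subtype.dist_eq, dist_eq_norm]
    show ‖(‖snocE (R x • Ω x) (T x)‖⁻¹ • snocE (R x • Ω x) (T x))
        - (‖snocE (R y • Ω y) (T y)‖⁻¹ • snocE (R y • Ω y) (T y))‖
      ≤ 8*(2+32*C^3) * lam * dist x y
    refine (normalize_sub_le (c := 1/4) (by norm_num) (hGnorm_lb x) (hGnorm_lb y)).trans ?_
    have h8 : (2:ℝ)/(1/4) = 8 := by norm_num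
    rw [h8]
    calc 8 * ‖snocE (R x • Ω x) (T x) - snocE (R y • Ω y) (T y)‖
        ≤ 8 * ((2+32*C^3) * lam * dist x y) := by linarith [hGlip x y]
      _ = 8*(2+32*C^3) * lam * dist x y := by ring
end

section
/- Let X be a metric space, m ≥ 0 an integer, C > 0, and λ₂ > λ₁ > 0. Suppose that every λ-Lipschitz map f : A → ∂Δ^{m+1}, where A is a nonempty subset of X and λ₁ < λ < λ₂, extends to a (C·λ)-Lipschitz map X → ∂Δ^{m+1}. Then t = 1/(4C(m+2)²(m+1)) has the following property: every cover U = {U_0,…,U_{m+1}} of X by m+2 subsets which is r-Lebesgue for some r with 4(m+2)²/λ₂ < r < 4(m+2)²/λ₁ admits a (t·r)-Lebesgue refinement V of multiplicity at most m+1. -/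
/-- The boundary of the standard `(m+1)`-simplex in `ℝ^{m+2}` with the `ℓ¹`-metric. -/
def boundarySimplexL1 (m : ℕ) : Set (PiLp 1 fun _ : Fin (m + 2) => ℝ) :=
  {x | ((∀ i, 0 ≤ x i) ∧ ∑ i, x i = 1) ∧ ∃ i, x i = 0}

/-- The multiplicity of a family `V` of subsets of `X` is at most `m`. -/
def MultiplicityLE {X : Type*} [MetricSpace X] (V : Set (Set X)) (m : ℕ) : Prop :=
  ∀ x : X, {W | W ∈ V ∧ x ∈ interior W}.Finite ∧ {W | W ∈ V ∧ x ∈ interior W}.ncard ≤ m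

lemma l1_dist_eq {n : ℕ} (u v : PiLp 1 fun _ : Fin n => ℝ) :
    dist u v = ∑ i, |u i - v i| := by
  rw [PiLp.dist_eq_sum (by norm_num : (0:ℝ) < (1 : ENNReal).toReal)]
  simp [Real.dist_eq]

lemma coord_le_l1_dist {n : ℕ} (u v : PiLp 1 fun _ : Fin n => ℝ) (i : Fin n) :
    |u i - v i| ≤ dist u v := by
  rw [l1_dist_eq]
  exact Finset.single_le_sum (f := fun j => |u j - v j|) (fun j _ => abs_nonneg _) (Finset.mem_univ i)

set_option maxHeartbeats 1000000 in
theorem lebesgue_refinement_of_boundary_extension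
    {X : Type*} [MetricSpace X] (m : ℕ) (C lam₁ lam₂ : ℝ)
    (hC : 0 < C) (h1 : 0 < lam₁) (h12 : lam₁ < lam₂)
    (hext : ∀ A : Set X, A.Nonempty → ∀ lam : ℝ, lam₁ < lam → lam < lam₂ →
      ∀ f : A → boundarySimplexL1 m,
        (∀ a b : A, dist (f a) (f b) ≤ lam * dist (a : X) (b : X)) →
        ∃ g : X → boundarySimplexL1 m, (∀ a : A, g a = f a) ∧
          ∀ x y : X, dist (g x) (g y) ≤ C * lam * dist x y) :
    ∀ r : ℝ, 4 * ((m : ℝ) + 2) ^ 2 / lam₂ < r → r < 4 * ((m : ℝ) + 2) ^ 2 / lam₁ →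
      ∀ U : Fin (m + 2) → Set X, (∀ x : X, ∃ i, Metric.ball x r ⊆ U i) →
        ∃ V : Set (Set X),
          (∀ W ∈ V, ∃ i, W ⊆ U i) ∧
          MultiplicityLE V (m + 1) ∧
          (∀ x : X, ∃ W ∈ V,
            Metric.ball x ((1 / (4 * C * ((m : ℝ) + 2) ^ 2 * ((m : ℝ) + 1))) * r) ⊆ W) := by
  intro r hr1 hr2 U hU
  have hm2 : (0:ℝ) < (m : ℝ) + 2 := by positivity
  have hm1 : (0:ℝ) < (m : ℝ) + 1 := by positivity
  have hl2 : 0 < lam₂ := h1.trans h12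
  have hr0 : 0 < r := lt_trans (by positivity) hr1
  set t : ℝ := 1 / (4 * C * ((m : ℝ) + 2) ^ 2 * ((m : ℝ) + 1)) with ht
  have ht0 : 0 < t := by rw [ht]; positivity
  -- trivial case : some member is the whole space
  by_cases hfull : ∃ i, U i = Set.univ
  · obtain ⟨i0, hi0⟩ := hfull
    refine ⟨{Set.univ}, ?_, ?_, ?_⟩
    · rintro W hW
      rw [Set.mem_singleton_iff] at hW
      subst hW
      exact ⟨i0, by rw [hi0]⟩
    · intro x
      have hsub : {W | W ∈ ({Set.univ} : Set (Set X)) ∧ x ∈ interior W} ⊆ {Set.univ} :=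
        fun W hW => hW.1
      refine ⟨(Set.finite_singleton _).subset hsub, ?_⟩
      calc {W | W ∈ ({Set.univ} : Set (Set X)) ∧ x ∈ interior W}.ncard
          ≤ ({Set.univ} : Set (Set X)).ncard :=
            Set.ncard_le_ncard hsub (Set.finite_singleton _)
        _ = 1 := Set.ncard_singleton _
        _ ≤ m + 1 := Nat.le_add_left 1 m
    · intro x
      exact ⟨Set.univ, rfl, Set.subset_univ _⟩
  push_neg at hfull
  have hne : ∀ i, ((U i)ᶜ).Nonempty := fun i => Set.nonempty_compl.2 (hfull i)
  -- the partition-of-unity-like functions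
  set φ : Fin (m + 2) → X → ℝ := fun i x => Metric.infDist x (U i)ᶜ with hφ
  have hφ0 : ∀ i x, 0 ≤ φ i x := fun i x => Metric.infDist_nonneg
  have hφr : ∀ x, ∃ i, r ≤ φ i x := by
    intro x
    obtain ⟨i, hi⟩ := hU x
    refine ⟨i, le_of_not_gt fun hlt => ?_⟩
    obtain ⟨y, hy, hdy⟩ := (Metric.infDist_lt_iff (hne i)).1 hlt
    exact hy (hi (Metric.mem_ball.2 (by rwa [dist_comm])))
  set S : X → ℝ := fun x => ∑ i, φ i x with hS
  have hSr : ∀ x, r ≤ S x := by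
    intro x
    obtain ⟨i, hi⟩ := hφr x
    exact hi.trans (Finset.single_le_sum (f := fun j => φ j x)
      (fun j _ => hφ0 j x) (Finset.mem_univ i))
  have hS0 : ∀ x, 0 < S x := fun x => lt_of_lt_of_le hr0 (hSr x)
  have hφLip : ∀ i (x y : X), |φ i x - φ i y| ≤ dist x y := by
    intro i x y
    rw [abs_sub_le_iff]
    constructor
    · have := Metric.infDist_le_infDist_add_dist (x := x) (y := y) (s := (U i)ᶜ)
      linarith
    · have := Metric.infDist_le_infDist_add_dist (x := y) (y := x) (s := (U i)ᶜ)
      rw [dist_comm] at this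
      linarith
  set f : X → (PiLp 1 fun _ : Fin (m + 2) => ℝ) := fun x => WithLp.toLp 1 (fun i => φ i x / S x) with hf
  have hfnn : ∀ x i, 0 ≤ f x i := fun x i => div_nonneg (hφ0 i x) (hS0 x).le
  have hfsum : ∀ x, ∑ i, f x i = 1 := by
    intro x
    rw [hf]
    simp only [PiLp.toLp_apply]
    rw [← Finset.sum_div]
    exact div_self (hS0 x).ne'
  -- Lipschitz bound for f
  have hfLip : ∀ x y : X, dist (f x) (f y) ≤ (2 * ((m : ℝ) + 2) / r) * dist x y := by
    intro x y
    set D : ℝ := ∑ j, |φ j x - φ j y| with hD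
    have hD0 : 0 ≤ D := Finset.sum_nonneg fun j _ => abs_nonneg _
    have hDle : D ≤ ((m : ℝ) + 2) * dist x y := by
      calc D ≤ ∑ _j : Fin (m + 2), dist x y :=
            Finset.sum_le_sum fun j _ => hφLip j x y
        _ = ((m : ℝ) + 2) * dist x y := by
            simp [Finset.sum_const, Finset.card_univ, nsmul_eq_mul]
    have hSd : |S y - S x| ≤ D := by
      have h1 : S y - S x = ∑ j, (φ j y - φ j x) := by
        rw [hS, ← Finset.sum_sub_distrib]
      rw [h1]
      refine (Finset.abs_sum_le_sum_abs _ _).trans ?_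
      rw [hD]
      apply le_of_eq
      exact Finset.sum_congr rfl fun j _ => abs_sub_comm _ _
    have hsum1 : ∑ i, φ i y / S y = 1 := by
      rw [← Finset.sum_div]
      exact div_self (hS0 y).ne'
    have hcoord : ∀ i, |f x i - f y i| ≤ |φ i x - φ i y| / S x + (φ i y / S y) * (D / S x) := by
      intro i
      have h1 : f x i - f y i = (φ i x - φ i y) / S x + (φ i y / S y) * ((S y - S x) / S x) := by
        rw [hf]
        dsimp only
        field_simp [(hS0 x).ne', (hS0 y).ne']
        ring
      rw [h1]
      refine (abs_add_le _ _).trans ?_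
      have e1 : |(φ i x - φ i y) / S x| = |φ i x - φ i y| / S x := by
        rw [abs_div, abs_of_pos (hS0 x)]
      have e2 : |(φ i y / S y) * ((S y - S x) / S x)| = (φ i y / S y) * (|S y - S x| / S x) := by
        rw [abs_mul, abs_div, abs_div, abs_of_pos (hS0 x), abs_of_pos (hS0 y),
          abs_of_nonneg (hφ0 i y)]
      rw [e1, e2]
      gcongr <;>
        first
          | exact hSd
          | exact (hS0 x).le
          | exact div_nonneg (hφ0 i y) (hS0 y).le
    calc dist (f x) (f y) = ∑ i, |f x i - f y i| := l1_dist_eq _ _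
      _ ≤ ∑ i, (|φ i x - φ i y| / S x + (φ i y / S y) * (D / S x)) :=
          Finset.sum_le_sum fun i _ => hcoord i
      _ = D / S x + 1 * (D / S x) := by
          rw [Finset.sum_add_distrib, ← Finset.sum_div, ← Finset.sum_mul, hsum1, hD]
      _ = 2 * D / S x := by ring
      _ ≤ 2 * (((m : ℝ) + 2) * dist x y) / r :=
          div_le_div₀ (by positivity) (by linarith) hr0 (hSr x)
      _ = (2 * ((m : ℝ) + 2) / r) * dist x y := by ring
  -- choice of lam
  set lam : ℝ := (max lam₁ (2 * ((m : ℝ) + 2) / r) + 4 * ((m : ℝ) + 2) ^ 2 / r) / 2 with hlam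
  have h2r : 2 * ((m : ℝ) + 2) / r < 4 * ((m : ℝ) + 2) ^ 2 / r := by
    rw [div_lt_div_iff₀ hr0 hr0]
    nlinarith [mul_pos hm2 hr0, mul_pos (mul_pos hm2 hm2) hr0]
  have h1r : lam₁ < 4 * ((m : ℝ) + 2) ^ 2 / r := by
    rw [lt_div_iff₀ hr0]
    have h := (lt_div_iff₀ h1).1 hr2
    nlinarith
  have hmax_lt : max lam₁ (2 * ((m : ℝ) + 2) / r) < 4 * ((m : ℝ) + 2) ^ 2 / r :=
    max_lt h1r h2r
  have hlam_lt : lam < 4 * ((m : ℝ) + 2) ^ 2 / r := by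
    rw [hlam]; linarith
  have hlam_gt1 : lam₁ < lam := by
    have h := le_max_left lam₁ (2 * ((m : ℝ) + 2) / r)
    rw [hlam]; linarith
  have hlam_ge : 2 * ((m : ℝ) + 2) / r ≤ lam := by
    have h := le_max_right lam₁ (2 * ((m : ℝ) + 2) / r)
    rw [hlam]; linarith
  have hlam_lt2 : lam < lam₂ := by
    refine lt_trans hlam_lt ?_
    rw [div_lt_iff₀ hr0]
    have h := (div_lt_iff₀ hl2).1 hr1
    nlinarith
  have hlam0 : 0 < lam := h1.trans hlam_gt1
  -- the key numerical inequality
  have hkey : C * lam * (t * r) < 1 / ((m : ℝ) + 1) := by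
    have hlr : lam * r < 4 * ((m : ℝ) + 2) ^ 2 := (lt_div_iff₀ hr0).1 hlam_lt
    have heq : C * lam * (t * r) = lam * r / (4 * ((m : ℝ) + 2) ^ 2 * ((m : ℝ) + 1)) := by
      rw [ht]
      field_simp
    rw [heq, div_lt_div_iff₀ (by positivity) hm1]
    nlinarith
  -- the boundary set A and the extension g
  set A : Set X := {x | ∃ i, φ i x = 0} with hA
  have hfA : ∀ x ∈ A, f x ∈ boundarySimplexL1 m := by
    intro x hx
    obtain ⟨i, hi⟩ := hx
    refine ⟨⟨hfnn x, hfsum x⟩, ⟨i, ?_⟩⟩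
    rw [hf]
    dsimp only
    rw [hi, zero_div]
  obtain ⟨g, hgA, hgLip⟩ :
      ∃ g : X → boundarySimplexL1 m,
        (∀ a ∈ A, (g a : PiLp 1 fun _ : Fin (m + 2) => ℝ) = f a) ∧
          ∀ x y : X, dist (g x) (g y) ≤ C * lam * dist x y := by
    rcases A.eq_empty_or_nonempty with hAe | hAne
    · have hp : (WithLp.toLp 1 (fun i => if i = 0 then (1 : ℝ) else 0) : PiLp 1 fun _ : Fin (m + 2) => ℝ) ∈
          boundarySimplexL1 m := by
        refine ⟨⟨fun i => ?_, by simp⟩, ⟨⟨1, by omega⟩, ?_⟩⟩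
        · dsimp only
          split <;> norm_num
        · have h10 : (⟨1, by omega⟩ : Fin (m + 2)) ≠ 0 := by
            intro h
            have h' := congrArg Fin.val h
            simp at h'
          dsimp only
          rw [if_neg h10]
      refine ⟨fun _ => ⟨_, hp⟩, ?_, ?_⟩
      · intro a ha
        rw [hAe] at ha
        exact absurd ha (Set.notMem_empty a)
      · intro x y
        simp only [dist_self]
        positivity
    · have hlip : ∀ a b : (A : Set X),
          dist ((fun a : (A : Set X) => (⟨f a, hfA a a.2⟩ : boundarySimplexL1 m)) a)
            ((fun a : (A : Set X) => (⟨f a, hfA a a.2⟩ : boundarySimplexL1 m)) b) ≤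
            lam * dist (a : X) (b : X) := by
        intro a b
        rw [Subtype.dist_eq]
        refine (hfLip a b).trans ?_
        exact mul_le_mul_of_nonneg_right hlam_ge dist_nonneg
      obtain ⟨g, hg1, hg2⟩ := hext A hAne lam hlam_gt1 hlam_lt2 _ hlip
      refine ⟨g, ?_, hg2⟩
      intro a ha
      have := hg1 ⟨a, ha⟩
      exact congrArg Subtype.val this
  -- every value of g has a large coordinate
  have hgmax : ∀ x : X, ∃ i, 1 / ((m : ℝ) + 1) ≤ (g x : PiLp 1 fun _ : Fin (m + 2) => ℝ) i := by
    intro x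
    obtain ⟨⟨hnn, hsum⟩, j, hj⟩ := (g x).2
    by_contra hcon
    push_neg at hcon
    have hcard : (Finset.univ.erase j).card = m + 1 := by
      rw [Finset.card_erase_of_mem (Finset.mem_univ j), Finset.card_univ, Fintype.card_fin]
      omega
    have hne' : (Finset.univ.erase j).Nonempty := by
      rw [← Finset.card_pos, hcard]; omega
    have hlt : ∑ i ∈ Finset.univ.erase j, (g x : PiLp 1 fun _ : Fin (m + 2) => ℝ) i <
        ∑ _i ∈ Finset.univ.erase j, 1 / ((m : ℝ) + 1) :=
      Finset.sum_lt_sum_of_nonempty hne' fun i _ => hcon i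
    have heq1 : ∑ i ∈ Finset.univ.erase j, (g x : PiLp 1 fun _ : Fin (m + 2) => ℝ) i = 1 := by
      have h := Finset.add_sum_erase Finset.univ
        (fun i => (g x : PiLp 1 fun _ : Fin (m + 2) => ℝ) i) (Finset.mem_univ j)
      dsimp only at h
      rw [hj, zero_add] at h
      rw [h]
      exact hsum
    have heq2 : ∑ _i ∈ Finset.univ.erase j, (1 : ℝ) / ((m : ℝ) + 1) = 1 := by
      rw [Finset.sum_const, hcard, nsmul_eq_mul]
      push_cast
      field_simp
    rw [heq1, heq2] at hlt
    exact lt_irrefl _ hlt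
  -- the refinement
  set V : Fin (m + 2) → Set X :=
    fun i => U i ∩ {y | 0 < (g y : PiLp 1 fun _ : Fin (m + 2) => ℝ) i} with hV
  refine ⟨Set.range V, ?_, ?_, ?_⟩
  · rintro W ⟨i, rfl⟩
    exact ⟨i, Set.inter_subset_left⟩
  · intro x
    obtain ⟨⟨hnn, hsum⟩, j, hj⟩ := (g x).2
    have hsub : {W | W ∈ Set.range V ∧ x ∈ interior W} ⊆ V '' {i | i ≠ j} := by
      rintro W ⟨⟨i, rfl⟩, hxi⟩
      refine ⟨i, ?_, rfl⟩
      intro hij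
      subst hij
      have hmem : x ∈ V i := interior_subset hxi
      have h0 : 0 < (g x : PiLp 1 fun _ : Fin (m + 2) => ℝ) i := hmem.2
      rw [hj] at h0
      exact lt_irrefl _ h0
    have hfin : (V '' {i | i ≠ j}).Finite := (Set.toFinite _).image V
    refine ⟨hfin.subset hsub, ?_⟩
    calc {W | W ∈ Set.range V ∧ x ∈ interior W}.ncard
        ≤ (V '' {i | i ≠ j}).ncard := Set.ncard_le_ncard hsub hfin
      _ ≤ ({i | i ≠ j} : Set (Fin (m + 2))).ncard := Set.ncard_image_le (Set.toFinite _)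
      _ ≤ m + 1 := by
          have : ({i | i ≠ j} : Set (Fin (m + 2))) = ({j}ᶜ : Set (Fin (m + 2))) := rfl
          rw [this]
          rw [Set.ncard_eq_toFinset_card']
          simp [Finset.card_compl]
  · intro x
    obtain ⟨i, hi⟩ := hgmax x
    refine ⟨V i, ⟨i, rfl⟩, ?_⟩
    intro y hy
    have hd : dist y x < t * r := Metric.mem_ball.1 hy
    have hCl0 : 0 < C * lam := mul_pos hC hlam0
    have hlt : dist ((g x : PiLp 1 fun _ : Fin (m + 2) => ℝ))
        ((g y : PiLp 1 fun _ : Fin (m + 2) => ℝ)) < 1 / ((m : ℝ) + 1) := by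
      have h1' := hgLip x y
      rw [Subtype.dist_eq] at h1'
      have h2' : C * lam * dist x y < C * lam * (t * r) := by
        apply mul_lt_mul_of_pos_left _ hCl0
        rwa [dist_comm]
      exact lt_of_le_of_lt h1' (lt_trans h2' hkey)
    have hcoord := coord_le_l1_dist
      (g x : PiLp 1 fun _ : Fin (m + 2) => ℝ) (g y : PiLp 1 fun _ : Fin (m + 2) => ℝ) i
    constructor
    · -- y ∈ U i
      by_contra hyU
      have hφy : φ i y = 0 := Metric.infDist_zero_of_mem hyU
      have hyA : y ∈ A := ⟨i, hφy⟩
      have hgy : (g y : PiLp 1 fun _ : Fin (m + 2) => ℝ) i = 0 := by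
        rw [hgA y hyA]
        rw [hf]
        dsimp only
        rw [hφy, zero_div]
      have hle : (g x : PiLp 1 fun _ : Fin (m + 2) => ℝ) i ≤
          dist ((g x : PiLp 1 fun _ : Fin (m + 2) => ℝ))
            ((g y : PiLp 1 fun _ : Fin (m + 2) => ℝ)) := by
        rw [hgy, sub_zero] at hcoord
        exact le_trans (le_abs_self _) hcoord
      linarith
    · -- 0 < g y i
      have h3 := le_abs_self ((g x : PiLp 1 fun _ : Fin (m + 2) => ℝ) i -
        (g y : PiLp 1 fun _ : Fin (m + 2) => ℝ) i)
      show 0 < (g y : PiLp 1 fun _ : Fin (m + 2) => ℝ) i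
      linarith
end

section
/- Let X be a metric space, m ≥ 0 an integer, t > 0, and r₂ > r₁ > 0. Let s > 0 be a constant such that for every λ > 0, every λ-Lipschitz map from a subset of X into Δ^{m+1} extends to an (s·λ)-Lipschitz map of X into Δ^{m+1}. Assume that every r-Lebesgue cover U = {U_0,…,U_{m+1}} of X by m+2 subsets with r₁ < r < r₂ admits a (t·r)-Lebesgue refinement of multiplicity at most m+1. Then every λ-Lipschitz map f : A → ∂Δ^{m+1}, A a nonempty subset of X, with 1/(12·s·r₂·(m+2)) < λ < 1/(12·s·r₁·(m+2)), extends to a (C·λ)-Lipschitz map X → ∂Δ^{m+1}, where C = 50(m+2)²·s + 150·s²·(m+2)⁵/t. -/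
/-- The standard `(m+1)`-simplex in `ℝ^{m+2}` with the `ℓ¹`-metric. -/
def stdSimplexL1 (m : ℕ) : Set (PiLp 1 fun _ : Fin (m + 2) => ℝ) :=
  {x | (∀ i, 0 ≤ x i) ∧ ∑ i, x i = 1}

open Metric Set

section Aux

lemma l1dist_aux (m : ℕ) (x y : PiLp 1 fun _ : Fin (m+2) => ℝ) :
    dist x y = ∑ i, |x i - y i| := by
  rw [PiLp.dist_eq_sum (by norm_num)]
  simp [Real.dist_eq]


lemma psi_facts {X : Type*} [MetricSpace X] (ρ : ℝ) (hρ : 0 < ρ) (W : Set X) :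
    ∃ ψ : X → ℝ, (∀ x, 0 ≤ ψ x) ∧ (∀ x, ψ x ≤ ρ) ∧
      (∀ x y, |ψ x - ψ y| ≤ dist x y) ∧
      (∀ x, 0 < ψ x → x ∈ interior W) ∧
      (∀ x, Metric.ball x ρ ⊆ W → ψ x = ρ) := by
  by_cases hW : (Wᶜ : Set X).Nonempty
  · refine ⟨fun x => min (Metric.infDist x Wᶜ) ρ, fun x => le_min Metric.infDist_nonneg hρ.le,
      fun x => min_le_right _ _, ?_, ?_, ?_⟩
    · intro x y
      have h1 : Metric.infDist x Wᶜ ≤ Metric.infDist y Wᶜ + dist x y :=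
        Metric.infDist_le_infDist_add_dist
      have h2 : Metric.infDist y Wᶜ ≤ Metric.infDist x Wᶜ + dist y x :=
        Metric.infDist_le_infDist_add_dist
      rw [dist_comm y x] at h2
      refine (abs_min_sub_min_le_max _ _ _ _).trans ?_
      rw [sub_self, abs_zero]
      refine max_le ?_ dist_nonneg
      rw [abs_sub_le_iff]
      constructor <;> linarith
    · intro x hx
      have hball : Metric.ball x (min (Metric.infDist x Wᶜ) ρ) ⊆ W := by
        intro y hy
        by_contra hyW
        have : Metric.infDist x Wᶜ ≤ dist x y := Metric.infDist_le_dist_of_mem hyW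
        have : dist x y < Metric.infDist x Wᶜ :=
          lt_of_lt_of_le (by simpa [dist_comm] using hy) (min_le_left _ _)
        linarith [Metric.infDist_le_dist_of_mem (s := (Wᶜ : Set X)) (x := x) (y := y) hyW,
          (min_le_left (Metric.infDist x Wᶜ) ρ)]
      have := interior_maximal hball Metric.isOpen_ball
      exact this (Metric.mem_ball_self hx)
    · intro x hx
      have : ρ ≤ Metric.infDist x Wᶜ := by
        by_contra hlt
        push_neg at hlt
        obtain ⟨y, hyW, hyd⟩ := (Metric.infDist_lt_iff hW).mp hlt
        exact hyW (hx (by simpa [Metric.mem_ball, dist_comm] using hyd))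
      exact min_eq_right this
  · rw [Set.not_nonempty_iff_eq_empty, Set.compl_empty_iff] at hW
    subst hW
    exact ⟨fun _ => ρ, fun _ => hρ.le, fun _ => le_rfl,
      fun x y => by simpa using dist_nonneg, fun x _ => by simp, fun _ _ => rfl⟩

/-- abstract algebra helper -/
lemma div_sub_div_abs (a b c d : ℝ) (hc : 0 < c) (hd : 0 < d) (hb : 0 ≤ b) :
    |a / c - b / d| ≤ |a - b| / c + b * (|c - d| / (c * d)) := by
  have key : a / c - b / d = (a - b) / c + b * ((d - c) / (c * d)) := by
    field_simp
    ring
  rw [key]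
  refine (abs_add_le _ _).trans ?_
  gcongr
  · rw [abs_div, abs_of_pos hc]
  · rw [abs_mul, abs_of_nonneg hb, abs_div, abs_of_pos (mul_pos hc hd), abs_sub_comm]

lemma nu_exists {X : Type*} [MetricSpace X] (m : ℕ) (V : Set (Set X))
    (U : Fin (m + 2) → Set X) (ρ : ℝ) (hρ : 0 < ρ)
    (hVU : ∀ W ∈ V, ∃ i, W ⊆ U i)
    (hmult : MultiplicityLE V (m + 1))
    (hleb : ∀ x : X, ∃ W ∈ V, Metric.ball x ρ ⊆ W) :
    ∃ ν : X → Fin (m + 2) → ℝ,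
      (∀ x i, 0 ≤ ν x i) ∧ (∀ x, ∑ i, ν x i = 1) ∧
      (∀ x, ∃ i, ν x i = 0) ∧
      (∀ x i, 0 < ν x i → x ∈ U i) ∧
      (∀ x y, ∑ i, |ν x i - ν y i| ≤ (4 * ((m : ℝ) + 1) / ρ) * dist x y) := by
  classical
  choose ψ hψ0 hψρ hψlip hψint hψfull using fun W => psi_facts (X := X) ρ hρ W
  -- colouring
  have hc : ∃ c : Set X → Fin (m + 2), ∀ W ∈ V, W ⊆ U (c W) := by
    refine ⟨fun W => if hW : W ∈ V then (hVU W hW).choose else 0, fun W hW => ?_⟩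
    simp only [dif_pos hW]
    exact (hVU W hW).choose_spec
  obtain ⟨c, hc⟩ := hc
  -- support finsets
  set Supp : X → Finset (Set X) := fun x => (hmult x).1.toFinset with hSupp
  have hSmem : ∀ x W, W ∈ Supp x ↔ W ∈ V ∧ x ∈ interior W := by
    intro x W; simp [hSupp, Set.Finite.mem_toFinset]
  have hScard : ∀ x, (Supp x).card ≤ m + 1 := by
    intro x
    have := (hmult x).2
    rwa [Set.ncard_eq_toFinset_card _ (hmult x).1] at this
  set N : X → Fin (m + 2) → ℝ := fun x i => ∑ W ∈ Supp x, if c W = i then ψ W x else 0 with hN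
  set D : X → ℝ := fun x => ∑ W ∈ Supp x, ψ W x with hD
  have hψzero : ∀ x W, W ∈ V → W ∉ Supp x → ψ W x = 0 := by
    intro x W hWV hWS
    by_contra hne
    have hpos : 0 < ψ W x := lt_of_le_of_ne (hψ0 W x) (Ne.symm hne)
    exact hWS ((hSmem x W).mpr ⟨hWV, hψint W x hpos⟩)
  -- sum extension
  have hext : ∀ x (F : Finset (Set X)), Supp x ⊆ F → (∀ W ∈ F, W ∈ V) →
      (∑ W ∈ F, ψ W x = D x) ∧ ∀ i, ∑ W ∈ F, (if c W = i then ψ W x else 0) = N x i := by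
    intro x F hsub hFV
    constructor
    · rw [hD]
      exact (Finset.sum_subset hsub (fun W hWF hWS => hψzero x W (hFV W hWF) hWS)).symm
    · intro i
      rw [hN]
      refine (Finset.sum_subset hsub (fun W hWF hWS => ?_)).symm
      rw [hψzero x W (hFV W hWF) hWS]
      simp
  have hDN : ∀ x, ∑ i, N x i = D x := by
    intro x
    rw [hN, hD, Finset.sum_comm]
    refine Finset.sum_congr rfl fun W _ => ?_
    simp [Finset.sum_ite_eq' Finset.univ (c W) (fun _ => ψ W x)]
  have hN0 : ∀ x i, 0 ≤ N x i := by
    intro x i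
    refine Finset.sum_nonneg fun W _ => ?_
    split_ifs
    · exact hψ0 W x
    · exact le_rfl
  have hDρ : ∀ x, ρ ≤ D x := by
    intro x
    obtain ⟨W₀, hW₀V, hW₀b⟩ := hleb x
    have hx0 : x ∈ interior W₀ := interior_maximal hW₀b Metric.isOpen_ball (Metric.mem_ball_self hρ)
    have hmem : W₀ ∈ Supp x := (hSmem x W₀).mpr ⟨hW₀V, hx0⟩
    have := hψfull W₀ x hW₀b
    calc ρ = ψ W₀ x := this.symm
      _ ≤ D x := Finset.single_le_sum (fun W _ => hψ0 W x) hmem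
  have hDpos : ∀ x, 0 < D x := fun x => lt_of_lt_of_le hρ (hDρ x)
  refine ⟨fun x i => N x i / D x, ?_, ?_, ?_, ?_, ?_⟩
  · intro x i; exact div_nonneg (hN0 x i) (hDpos x).le
  · intro x
    rw [← Finset.sum_div, hDN, div_self (hDpos x).ne']
  · -- zero coordinate
    intro x
    have hcard : ((Supp x).image c).card < Fintype.card (Fin (m + 2)) := by
      calc ((Supp x).image c).card ≤ (Supp x).card := Finset.card_image_le
        _ ≤ m + 1 := hScard x
        _ < m + 2 := by omega
        _ = Fintype.card (Fin (m + 2)) := by simp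
    have : ∃ i, i ∉ (Supp x).image c := by
      by_contra hall
      push_neg at hall
      have : (Supp x).image c = Finset.univ := Finset.eq_univ_iff_forall.mpr hall
      rw [this, Finset.card_univ] at hcard
      exact lt_irrefl _ hcard
    obtain ⟨i, hi⟩ := this
    refine ⟨i, ?_⟩
    have : N x i = 0 := by
      rw [hN]
      refine Finset.sum_eq_zero fun W hW => ?_
      have : c W ≠ i := fun h => hi (h ▸ Finset.mem_image_of_mem c hW)
      simp [this]
    simp [this]
  · -- support
    intro x i hpos
    have hpos' : 0 < N x i / D x := hpos
    have hNpos : 0 < N x i := by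
      by_contra hle
      push_neg at hle
      have hz : N x i = 0 := le_antisymm hle (hN0 x i)
      rw [hz, zero_div] at hpos'
      exact lt_irrefl _ hpos'
    have : ∃ W ∈ Supp x, (0 : ℝ) < if c W = i then ψ W x else 0 := by
      by_contra hall
      push_neg at hall
      have : N x i ≤ 0 := Finset.sum_nonpos fun W hW => hall W hW
      linarith
    obtain ⟨W, hWS, hWpos⟩ := this
    by_cases hcW : c W = i
    · rw [if_pos hcW] at hWpos
      have hxW : x ∈ interior W := hψint W x hWpos
      have hWV : W ∈ V := ((hSmem x W).mp hWS).1
      exact hcW ▸ hc W hWV (interior_subset hxW)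
    · rw [if_neg hcW] at hWpos; exact absurd hWpos (lt_irrefl 0)
  · -- Lipschitz
    intro x y
    set F : Finset (Set X) := Supp x ∪ Supp y with hF
    have hFV : ∀ W ∈ F, W ∈ V := by
      intro W hW
      rcases Finset.mem_union.mp hW with h | h
      · exact ((hSmem x W).mp h).1
      · exact ((hSmem y W).mp h).1
    have hFcard : (F.card : ℝ) ≤ 2 * ((m : ℝ) + 1) := by
      have hu : F.card ≤ (Supp x).card + (Supp y).card := by
        rw [hF]; exact Finset.card_union_le _ _
      have hx := hScard x
      have hy := hScard y
      have : F.card ≤ 2 * (m + 1) := by omega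
      calc (F.card : ℝ) ≤ ((2 * (m + 1) : ℕ) : ℝ) := by exact_mod_cast this
        _ = 2 * ((m : ℝ) + 1) := by push_cast; ring
    have hsum_psi : ∑ W ∈ F, |ψ W x - ψ W y| ≤ 2 * ((m : ℝ) + 1) * dist x y := by
      calc ∑ W ∈ F, |ψ W x - ψ W y| ≤ ∑ _W ∈ F, dist x y :=
            Finset.sum_le_sum fun W _ => hψlip W x y
        _ = F.card * dist x y := by rw [Finset.sum_const, nsmul_eq_mul]
        _ ≤ 2 * ((m : ℝ) + 1) * dist x y := by
            apply mul_le_mul_of_nonneg_right hFcard dist_nonneg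
    have hDdiff : |D x - D y| ≤ 2 * ((m : ℝ) + 1) * dist x y := by
      rw [← (hext x F Finset.subset_union_left hFV).1, ← (hext y F Finset.subset_union_right hFV).1]
      calc |∑ W ∈ F, ψ W x - ∑ W ∈ F, ψ W y| = |∑ W ∈ F, (ψ W x - ψ W y)| := by
            rw [Finset.sum_sub_distrib]
        _ ≤ ∑ W ∈ F, |ψ W x - ψ W y| := Finset.abs_sum_le_sum_abs _ _
        _ ≤ _ := hsum_psi
    have hNdiff : ∑ i, |N x i - N y i| ≤ 2 * ((m : ℝ) + 1) * dist x y := by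
      have key : ∀ i, |N x i - N y i| ≤
          ∑ W ∈ F, |( if c W = i then ψ W x else 0) - (if c W = i then ψ W y else 0)| := by
        intro i
        rw [← (hext x F Finset.subset_union_left hFV).2 i,
          ← (hext y F Finset.subset_union_right hFV).2 i, ← Finset.sum_sub_distrib]
        exact Finset.abs_sum_le_sum_abs _ _
      calc ∑ i, |N x i - N y i|
          ≤ ∑ i, ∑ W ∈ F, |(if c W = i then ψ W x else 0) - (if c W = i then ψ W y else 0)| :=
            Finset.sum_le_sum fun i _ => key i
        _ = ∑ W ∈ F, ∑ i, |(if c W = i then ψ W x else 0) - (if c W = i then ψ W y else 0)| :=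
            Finset.sum_comm
        _ = ∑ W ∈ F, |ψ W x - ψ W y| := by
            refine Finset.sum_congr rfl fun W _ => ?_
            have : ∀ i : Fin (m + 2), |(if c W = i then ψ W x else 0) -
                (if c W = i then ψ W y else 0)| = if c W = i then |ψ W x - ψ W y| else 0 := by
              intro i
              by_cases h : c W = i <;> simp [h]
            rw [Finset.sum_congr rfl fun i _ => this i]
            simp [Finset.sum_ite_eq' Finset.univ (c W) (fun _ => |ψ W x - ψ W y|)]
        _ ≤ _ := hsum_psi
    calc ∑ i, |N x i / D x - N y i / D y|
        ≤ ∑ i, (|N x i - N y i| / D x + N y i * (|D x - D y| / (D x * D y))) :=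
          Finset.sum_le_sum fun i _ =>
            div_sub_div_abs _ _ _ _ (hDpos x) (hDpos y) (hN0 y i)
      _ = (∑ i, |N x i - N y i|) / D x + (∑ i, N y i) * (|D x - D y| / (D x * D y)) := by
          rw [Finset.sum_add_distrib, ← Finset.sum_div, ← Finset.sum_mul]
      _ = (∑ i, |N x i - N y i|) / D x + |D x - D y| / D x := by
          rw [hDN y]
          congr 1
          rw [mul_comm (D x) (D y), ← mul_div_assoc]
          exact mul_div_mul_left _ _ (hDpos y).ne'
      _ ≤ (2 * ((m : ℝ) + 1) * dist x y) / ρ + (2 * ((m : ℝ) + 1) * dist x y) / ρ := by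
          refine add_le_add ?_ ?_
          · exact div_le_div₀ (by positivity) hNdiff hρ (hDρ x)
          · exact div_le_div₀ (by positivity) hDdiff hρ (hDρ x)
      _ = (4 * ((m : ℝ) + 1) / ρ) * dist x y := by ring

end Aux

set_option maxHeartbeats 2000000 in
theorem boundary_extension_of_lebesgue_refinements
    {X : Type*} [MetricSpace X] (m : ℕ) (t s r₁ r₂ : ℝ)
    (ht : 0 < t) (hr₁ : 0 < r₁) (hr : r₁ < r₂) (hs : 0 < s)
    (hsimp : ∀ A : Set X, A.Nonempty → ∀ lam : ℝ, 0 < lam →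
      ∀ f : A → stdSimplexL1 m,
        (∀ a b : A, dist (f a) (f b) ≤ lam * dist (a : X) (b : X)) →
        ∃ g : X → stdSimplexL1 m, (∀ a : A, g a = f a) ∧
          ∀ x y : X, dist (g x) (g y) ≤ s * lam * dist x y)
    (hcov : ∀ r : ℝ, r₁ < r → r < r₂ →
      ∀ U : Fin (m + 2) → Set X, (∀ x : X, ∃ i, Metric.ball x r ⊆ U i) →
        ∃ V : Set (Set X),
          (∀ W ∈ V, ∃ i, W ⊆ U i) ∧
          MultiplicityLE V (m + 1) ∧
          (∀ x : X, ∃ W ∈ V, Metric.ball x (t * r) ⊆ W)) :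
    ∀ lam : ℝ, 1 / (12 * s * r₂ * ((m : ℝ) + 2)) < lam → lam < 1 / (12 * s * r₁ * ((m : ℝ) + 2)) →
      ∀ A : Set X, A.Nonempty →
        ∀ f : A → boundarySimplexL1 m,
          (∀ a b : A, dist (f a) (f b) ≤ lam * dist (a : X) (b : X)) →
          ∃ g : X → boundarySimplexL1 m, (∀ a : A, g a = f a) ∧
            ∀ x y : X, dist (g x) (g y) ≤
              (50 * ((m : ℝ) + 2) ^ 2 * s + 150 * s ^ 2 * ((m : ℝ) + 2) ^ 5 / t) * lam *
                dist x y := by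
  classical
  intro lam hlam1 hlam2 A hA f hf
  have hm0 : (0:ℝ) ≤ (m:ℝ) := Nat.cast_nonneg m
  have hn2 : (2:ℝ) ≤ (m:ℝ) + 2 := by linarith
  have hnpos : (0:ℝ) < (m:ℝ) + 2 := by linarith
  have hr₂ : 0 < r₂ := hr₁.trans hr
  have h12r : (0:ℝ) < 12 * s * r₂ * ((m:ℝ) + 2) :=
    mul_pos (mul_pos (mul_pos (by norm_num) hs) hr₂) hnpos
  have hlam0 : 0 < lam := lt_trans (one_div_pos.mpr h12r) hlam1
  rcases subsingleton_or_nontrivial X with hXsub | hXnt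
  · -- trivial case
    obtain ⟨a0, ha0⟩ := hA
    refine ⟨fun _ => f ⟨a0, ha0⟩, fun a => ?_, fun x y => ?_⟩
    · have : (⟨a0, ha0⟩ : A) = a := Subtype.ext (Subsingleton.elim _ _)
      rw [this]
    · have hxy : x = y := Subsingleton.elim x y
      subst hxy
      simp [dist_self]
  · -- nontrivial: first derive 1 ≤ s
    have hstd_diam : ∀ u v : stdSimplexL1 m, dist u v ≤ 2 := by
      intro u v
      rw [Subtype.dist_eq, l1dist_aux]
      calc ∑ i, |(u : PiLp 1 fun _ : Fin (m+2) => ℝ) i - (v : PiLp 1 fun _ : Fin (m+2) => ℝ) i|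
          ≤ ∑ i, ((u : PiLp 1 fun _ : Fin (m+2) => ℝ) i + (v : PiLp 1 fun _ : Fin (m+2) => ℝ) i) := by
            refine Finset.sum_le_sum fun i _ => ?_
            have h1 := u.2.1 i
            have h2 := v.2.1 i
            rw [abs_sub_le_iff]
            constructor <;> linarith
        _ = 2 := by rw [Finset.sum_add_distrib, u.2.2, v.2.2]; norm_num
    have hs1 : (1:ℝ) ≤ s := by
      obtain ⟨x0, x1, hne⟩ := exists_pair_ne X
      have hd0 : 0 < dist x0 x1 := dist_pos.mpr hne
      have hemem : ∀ k : Fin (m+2),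
          WithLp.toLp 1 (fun j => if j = k then (1:ℝ) else 0) ∈ stdSimplexL1 m := by
        intro k
        constructor
        · intro i; simp only [WithLp.ofLp_toLp]; split_ifs <;> norm_num
        · simp
      have hdist : dist (α := PiLp 1 fun _ : Fin (m+2) => ℝ)
          (WithLp.toLp 1 fun j => if j = 0 then (1:ℝ) else 0) (WithLp.toLp 1 fun j => if j = 1 then (1:ℝ) else 0) = 2 := by
        rw [l1dist_aux]
        simp only [WithLp.ofLp_toLp]
        have h01 : (0 : Fin (m+2)) ≠ 1 := by
          intro hcon
          have := congrArg Fin.val hcon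
          simp at this
        have key : ∀ j : Fin (m+2), |(if j = 0 then (1:ℝ) else 0) - (if j = 1 then (1:ℝ) else 0)|
            = (if j = 0 then (1:ℝ) else 0) + (if j = 1 then (1:ℝ) else 0) := by
          intro j
          by_cases hj0 : j = 0 <;> by_cases hj1 : j = 1
          · exact absurd (hj0.symm.trans hj1) h01
          · simp [hj0, hj1]
          · simp [hj0, hj1]
          · simp [hj0, hj1]
        rw [Finset.sum_congr rfl fun j _ => key j, Finset.sum_add_distrib]
        norm_num
      set A' : Set X := {x0, x1} with hA'
      have hx0A : x0 ∈ A' := by simp [hA']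
      have hx1A : x1 ∈ A' := by simp [hA']
      set f' : A' → stdSimplexL1 m := fun a => if (a : X) = x0
        then ⟨WithLp.toLp 1 fun j => if j = 0 then (1:ℝ) else 0, hemem 0⟩
        else ⟨WithLp.toLp 1 fun j => if j = 1 then (1:ℝ) else 0, hemem 1⟩ with hf'
      have hf'lip : ∀ a b : A', dist (f' a) (f' b) ≤ (2 / dist x0 x1) * dist (a:X) (b:X) := by
        intro a b
        by_cases hab : (a : X) = (b : X)
        · have : a = b := Subtype.ext hab
          subst this
          rw [dist_self]
          exact mul_nonneg (div_nonneg (by norm_num) dist_nonneg) dist_nonneg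
        · have hdab : dist (a:X) (b:X) = dist x0 x1 := by
            have ha' := a.2
            have hb' := b.2
            simp only [hA', Set.mem_insert_iff, Set.mem_singleton_iff] at ha' hb'
            rcases ha' with ha | ha <;> rcases hb' with hb | hb
            · exact absurd (ha.trans hb.symm) hab
            · rw [ha, hb]
            · rw [ha, hb, dist_comm]
            · exact absurd (ha.trans hb.symm) hab
          rw [hdab]
          calc dist (f' a) (f' b) ≤ 2 := hstd_diam _ _
            _ = (2 / dist x0 x1) * dist x0 x1 := by field_simp
      obtain ⟨g', hg'A, hg'l⟩ := hsimp A' ⟨x0, hx0A⟩ (2 / dist x0 x1)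
        (div_pos (by norm_num) hd0) f' hf'lip
      have h0 : g' x0 = f' ⟨x0, hx0A⟩ := hg'A ⟨x0, hx0A⟩
      have h1 : g' x1 = f' ⟨x1, hx1A⟩ := hg'A ⟨x1, hx1A⟩
      have hfx0 : f' ⟨x0, hx0A⟩ = ⟨WithLp.toLp 1 fun j => if j = 0 then (1:ℝ) else 0, hemem 0⟩ := by
        simp [hf']
      have hfx1 : f' ⟨x1, hx1A⟩ = ⟨WithLp.toLp 1 fun j => if j = 1 then (1:ℝ) else 0, hemem 1⟩ := by
        simp [hf', hne.symm]
      have hd2 : dist (⟨WithLp.toLp 1 fun j => if j = 0 then (1:ℝ) else 0, hemem 0⟩ : stdSimplexL1 m)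
          (⟨WithLp.toLp 1 fun j => if j = 1 then (1:ℝ) else 0, hemem 1⟩ : stdSimplexL1 m) = 2 := by
        rw [Subtype.dist_eq]
        exact hdist
      have hfin := hg'l x0 x1
      rw [h0, h1, hfx0, hfx1, hd2] at hfin
      have h2s : s * (2 / dist x0 x1) * dist x0 x1 = 2 * s := by field_simp
      rw [h2s] at hfin
      linarith
    -- Step 1: extend f into the simplex
    obtain ⟨h, hhA, hhl⟩ := hsimp A hA lam hlam0
      (fun a => ⟨(f a : PiLp 1 fun _ : Fin (m+2) => ℝ), (f a).2.1⟩)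
      (fun a b => by
        have h' := hf a b
        rw [Subtype.dist_eq] at h' ⊢
        exact h')
    set hv : X → Fin (m+2) → ℝ := fun x i => (h x : PiLp 1 fun _ : Fin (m+2) => ℝ) i with hhv
    have hv0 : ∀ x i, 0 ≤ hv x i := fun x i => (h x).2.1 i
    have hv1 : ∀ x, ∑ i, hv x i = 1 := fun x => (h x).2.2
    have hvdist : ∀ x y, ∑ i, |hv x i - hv y i| ≤ s * lam * dist x y := by
      intro x y
      have h' := hhl x y
      rw [Subtype.dist_eq, l1dist_aux] at h'
      exact h'
    have hcoordLip : ∀ x y i, |hv x i - hv y i| ≤ s * lam * dist x y := by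
      intro x y i
      refine le_trans ?_ (hvdist x y)
      exact Finset.single_le_sum (f := fun j => |hv x j - hv y j|)
        (fun j _ => abs_nonneg _) (Finset.mem_univ i)
    -- the minimum coordinate
    set μ : X → ℝ := fun x => Finset.univ.inf' ⟨0, Finset.mem_univ 0⟩ (hv x) with hμdef
    have hμle : ∀ x i, μ x ≤ hv x i := fun x i => Finset.inf'_le _ (Finset.mem_univ i)
    have hμmem : ∀ x, ∃ i, hv x i = μ x := by
      intro x
      obtain ⟨i, _, hi⟩ := Finset.exists_mem_eq_inf' (⟨0, Finset.mem_univ 0⟩ :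
        (Finset.univ : Finset (Fin (m+2))).Nonempty) (hv x)
      exact ⟨i, hi.symm⟩
    have hμ0 : ∀ x, 0 ≤ μ x := fun x => Finset.le_inf' _ _ (fun i _ => hv0 x i)
    have hμlip : ∀ x y, |μ x - μ y| ≤ s * lam * dist x y := by
      intro x y
      rw [abs_sub_le_iff]
      constructor
      · obtain ⟨i, hi⟩ := hμmem y
        have h1 : μ x ≤ hv x i := hμle x i
        have h2 := hcoordLip x y i
        rw [abs_sub_le_iff] at h2
        linarith [h2.1, hi.le, hi.ge]
      · obtain ⟨i, hi⟩ := hμmem x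
        have h1 : μ y ≤ hv y i := hμle y i
        have h2 := hcoordLip x y i
        rw [abs_sub_le_iff] at h2
        linarith [h2.2, hi.le, hi.ge]
    -- the scale r and the basic quantity q
    set q : ℝ := 1 / (12 * ((m:ℝ) + 2)) with hqdef
    have hq0 : 0 < q := by rw [hqdef]; positivity
    set r : ℝ := 1 / (12 * s * lam * ((m:ℝ) + 2)) with hrdef
    have hrpos : 0 < r := by
      rw [hrdef]
      apply one_div_pos.mpr
      exact mul_pos (mul_pos (mul_pos (by norm_num) hs) hlam0) hnpos
    have hsl0 : 0 < s * lam := mul_pos hs hlam0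
    have hLr : s * lam * r = q := by
      rw [hrdef, hqdef]
      field_simp
    have hr₁r : r₁ < r := by
      have hD : (0:ℝ) < 12 * s * r₁ * ((m:ℝ) + 2) :=
        mul_pos (mul_pos (mul_pos (by norm_num) hs) hr₁) hnpos
      have h' : lam * (12 * s * r₁ * ((m:ℝ) + 2)) < 1 := (lt_div_iff₀ hD).mp hlam2
      rw [hrdef, lt_div_iff₀ (mul_pos (mul_pos (mul_pos (by norm_num) hs) hlam0) hnpos)]
      calc r₁ * (12 * s * lam * ((m:ℝ) + 2)) = lam * (12 * s * r₁ * ((m:ℝ) + 2)) := by ring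
        _ < 1 := h'
    have hrr₂ : r < r₂ := by
      have h' : 1 < lam * (12 * s * r₂ * ((m:ℝ) + 2)) := (div_lt_iff₀ h12r).mp hlam1
      rw [hrdef, div_lt_iff₀ (mul_pos (mul_pos (mul_pos (by norm_num) hs) hlam0) hnpos)]
      calc (1:ℝ) < lam * (12 * s * r₂ * ((m:ℝ) + 2)) := h'
        _ = r₂ * (12 * s * lam * ((m:ℝ) + 2)) := by ring
    have htr : 0 < t * r := mul_pos ht hrpos
    -- the cover
    set U : Fin (m+2) → Set X := fun i =>
      {x | μ x + 4 * q ≤ hv x i} ∪ {x | 5 * q ≤ μ x} with hUdef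
    have hconst : ∑ _i : Fin (m+2), (1 / ((m:ℝ) + 2)) = 1 := by
      rw [Finset.sum_const, Finset.card_univ, Fintype.card_fin, nsmul_eq_mul]
      push_cast
      field_simp
    have hq12 : 1 / ((m:ℝ) + 2) = 12 * q := by rw [hqdef]; field_simp
    have hleb : ∀ x : X, ∃ i, Metric.ball x r ⊆ U i := by
      intro x
      by_cases hx : μ x ≤ 6 * q
      · have hmax : ∃ i, 12 * q ≤ hv x i := by
          have hsum : ∑ _i : Fin (m+2), (1 / ((m:ℝ) + 2)) ≤ ∑ i, hv x i := by
            rw [hconst, hv1 x]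
          obtain ⟨i, _, hi⟩ := Finset.exists_le_of_sum_le ⟨0, Finset.mem_univ 0⟩ hsum
          exact ⟨i, by rw [← hq12]; exact hi⟩
        obtain ⟨i, hi⟩ := hmax
        refine ⟨i, fun y hy => Or.inl ?_⟩
        have hdxy : dist x y ≤ r := by
          rw [dist_comm]
          exact (Metric.mem_ball.mp hy).le
        have hd1 : |hv x i - hv y i| ≤ q := by
          refine le_trans (hcoordLip x y i) ?_
          rw [← hLr]
          exact mul_le_mul_of_nonneg_left hdxy hsl0.le
        have hd2 : |μ x - μ y| ≤ q := by
          refine le_trans (hμlip x y) ?_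
          rw [← hLr]
          exact mul_le_mul_of_nonneg_left hdxy hsl0.le
        rw [abs_sub_le_iff] at hd1 hd2
        show μ y + 4 * q ≤ hv y i
        linarith [hd1.1, hd1.2, hd2.1, hd2.2]
      · push_neg at hx
        refine ⟨0, fun y hy => Or.inr ?_⟩
        have hdxy : dist x y ≤ r := by
          rw [dist_comm]
          exact (Metric.mem_ball.mp hy).le
        have hd2 : |μ x - μ y| ≤ q := by
          refine le_trans (hμlip x y) ?_
          rw [← hLr]
          exact mul_le_mul_of_nonneg_left hdxy hsl0.le
        rw [abs_sub_le_iff] at hd2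
        show 5 * q ≤ μ y
        linarith [hd2.1]
    obtain ⟨V, hVU, hmult, hVleb⟩ := hcov r hr₁r hrr₂ U hleb
    obtain ⟨ν, hν0, hν1, hνz, hνsupp, hνlip⟩ := nu_exists m V U (t * r) htr hVU hmult hVleb
    -- the retraction-type map G
    set μb : X → ℝ := fun x => min (μ x) (4 * q) with hμbdef
    have hμb0 : ∀ x, 0 ≤ μb x := fun x => le_min (hμ0 x) (by positivity)
    have hnq : ((m:ℝ) + 2) * q = 1 / 12 := by
      rw [hqdef]
      field_simp
    have hden : ∀ x, 2/3 ≤ 1 - ((m:ℝ) + 2) * μb x := by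
      intro x
      have h1 : μb x ≤ 4 * q := min_le_right _ _
      have h2 : ((m:ℝ) + 2) * μb x ≤ ((m:ℝ) + 2) * (4 * q) :=
        mul_le_mul_of_nonneg_left h1 hnpos.le
      have h3 : ((m:ℝ) + 2) * (4 * q) = 1/3 := by
        rw [show ((m:ℝ) + 2) * (4 * q) = 4 * (((m:ℝ) + 2) * q) by ring, hnq]
        norm_num
      linarith
    have hdenpos : ∀ x, 0 < 1 - ((m:ℝ) + 2) * μb x := by
      intro x
      linarith [hden x]
    have hdenle : ∀ x, 1 - ((m:ℝ) + 2) * μb x ≤ 1 := by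
      intro x
      have := hμb0 x
      nlinarith
    set τ : X → ℝ := fun x => (1 - ((m:ℝ) + 2) * μb x)⁻¹ with hτdef
    have hτpos : ∀ x, 0 < τ x := fun x => inv_pos.mpr (hdenpos x)
    have hτ1 : ∀ x, 1 ≤ τ x := by
      intro x
      have h1 := hdenpos x
      have h2 := hdenle x
      have h3 : τ x * (1 - ((m:ℝ) + 2) * μb x) = 1 := inv_mul_cancel₀ h1.ne'
      nlinarith [hτpos x]
    have hτ32 : ∀ x, τ x ≤ 3/2 := by
      intro x
      have h1 := hdenpos x
      have h2 := hden x
      have h3 : τ x * (1 - ((m:ℝ) + 2) * μb x) = 1 := inv_mul_cancel₀ h1.ne'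
      nlinarith [hτpos x]
    have hkey : ∀ x, τ x * (1 / ((m:ℝ) + 2) - μb x) = 1 / ((m:ℝ) + 2) := by
      intro x
      have h1 := (hdenpos x).ne'
      rw [hτdef]
      field_simp
    set G : X → Fin (m+2) → ℝ := fun x i =>
      1 / ((m:ℝ) + 2) + τ x * (hv x i - 1 / ((m:ℝ) + 2)) with hGdef
    have hG0 : ∀ x i, 0 ≤ G x i := by
      intro x i
      have h1 : μb x ≤ hv x i := le_trans (min_le_left _ _) (hμle x i)
      have h2 : τ x * (μb x - 1 / ((m:ℝ) + 2)) ≤ τ x * (hv x i - 1 / ((m:ℝ) + 2)) :=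
        mul_le_mul_of_nonneg_left (by linarith) (hτpos x).le
      have h3 : τ x * (μb x - 1 / ((m:ℝ) + 2)) = -(1 / ((m:ℝ) + 2)) := by
        have h4 : τ x * (μb x - 1 / ((m:ℝ) + 2)) =
            -(τ x * (1 / ((m:ℝ) + 2) - μb x)) := by ring
        rw [h4, hkey x]
      show 0 ≤ 1 / ((m:ℝ) + 2) + τ x * (hv x i - 1 / ((m:ℝ) + 2))
      linarith
    have hGsum : ∀ x, ∑ i, G x i = 1 := by
      intro x
      show ∑ i, (1 / ((m:ℝ) + 2) + τ x * (hv x i - 1 / ((m:ℝ) + 2))) = 1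
      rw [Finset.sum_add_distrib, ← Finset.mul_sum, Finset.sum_sub_distrib, hv1 x, hconst]
      ring
    have hGzero : ∀ x i, hv x i = μ x → μ x ≤ 4 * q → G x i = 0 := by
      intro x i hi hle
      have hμbx : μb x = μ x := min_eq_left hle
      show 1 / ((m:ℝ) + 2) + τ x * (hv x i - 1 / ((m:ℝ) + 2)) = 0
      rw [hi, ← hμbx]
      have h4 : τ x * (μb x - 1 / ((m:ℝ) + 2)) = -(τ x * (1 / ((m:ℝ) + 2) - μb x)) := by ring
      rw [h4, hkey x]
      ring
    have hGsimplex : ∀ x, (∑ i, G x i = 1) := hGsum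
    have hGlip : ∀ x y, ∑ i, |G x i - G y i| ≤ 6 * ((m:ℝ) + 2) * (s * lam) * dist x y := by
      intro x y
      have hμblip : |μb x - μb y| ≤ s * lam * dist x y := by
        refine le_trans ?_ (hμlip x y)
        have := abs_min_sub_min_le_max (μ x) (4*q) (μ y) (4*q)
        simpa using this
      have hτdiff : |τ x - τ y| ≤ (9/4) * ((m:ℝ) + 2) * (s * lam) * dist x y := by
        have hid : τ x - τ y = (((m:ℝ) + 2) * μb x - ((m:ℝ) + 2) * μb y) * (τ x * τ y) := by
          rw [hτdef]
          field_simp [(hdenpos x).ne', (hdenpos y).ne']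
          ring
        rw [hid, abs_mul, abs_mul]
        have h1 : |((m:ℝ) + 2) * μb x - ((m:ℝ) + 2) * μb y| =
            ((m:ℝ) + 2) * |μb x - μb y| := by
          rw [show ((m:ℝ) + 2) * μb x - ((m:ℝ) + 2) * μb y
            = ((m:ℝ) + 2) * (μb x - μb y) by ring, abs_mul, abs_of_pos hnpos]
        rw [h1, abs_of_pos (hτpos x), abs_of_pos (hτpos y)]
        have h2 : τ x * τ y ≤ 9/4 := by nlinarith [hτ1 x, hτ1 y, hτ32 x, hτ32 y]
        have h3 : ((m:ℝ) + 2) * |μb x - μb y| ≤ ((m:ℝ) + 2) * (s * lam * dist x y) :=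
          mul_le_mul_of_nonneg_left hμblip hnpos.le
        have h4 : (0:ℝ) ≤ ((m:ℝ) + 2) * |μb x - μb y| := by positivity
        nlinarith [abs_nonneg (μb x - μb y), mul_pos (hτpos x) (hτpos y)]
      have hsum2 : ∑ i, |hv y i - 1 / ((m:ℝ) + 2)| ≤ 2 := by
        calc ∑ i, |hv y i - 1 / ((m:ℝ) + 2)| ≤ ∑ i, (hv y i + 1 / ((m:ℝ) + 2)) := by
              refine Finset.sum_le_sum fun i _ => ?_
              rw [abs_sub_le_iff]
              have h5 := hv0 y i
              have h6 : (0:ℝ) ≤ 1 / ((m:ℝ) + 2) := by positivity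
              constructor
              · linarith
              · linarith
          _ = 2 := by rw [Finset.sum_add_distrib, hv1 y, hconst]; norm_num
      calc ∑ i, |G x i - G y i|
          = ∑ i, |τ x * (hv x i - hv y i) + (τ x - τ y) * (hv y i - 1 / ((m:ℝ) + 2))| := by
            refine Finset.sum_congr rfl fun i _ => ?_
            congr 1
            show (1 / ((m:ℝ) + 2) + τ x * (hv x i - 1 / ((m:ℝ) + 2)))
              - (1 / ((m:ℝ) + 2) + τ y * (hv y i - 1 / ((m:ℝ) + 2))) = _
            ring
        _ ≤ ∑ i, (τ x * |hv x i - hv y i| + |τ x - τ y| * |hv y i - 1 / ((m:ℝ) + 2)|) := by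
            refine Finset.sum_le_sum fun i _ => ?_
            refine le_trans (abs_add_le _ _) ?_
            rw [abs_mul, abs_mul, abs_of_pos (hτpos x)]
        _ = τ x * (∑ i, |hv x i - hv y i|) + |τ x - τ y| * ∑ i, |hv y i - 1 / ((m:ℝ) + 2)| := by
            rw [Finset.sum_add_distrib, ← Finset.mul_sum, ← Finset.mul_sum]
        _ ≤ (3/2) * (s * lam * dist x y) +
            ((9/4) * ((m:ℝ) + 2) * (s * lam) * dist x y) * 2 := by
            refine add_le_add ?_ ?_
            · have hb := hvdist x y
              have hbn : (0:ℝ) ≤ ∑ i, |hv x i - hv y i| := by positivity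
              nlinarith [hτ1 x, hτ32 x, mul_nonneg hsl0.le (dist_nonneg (x := x) (y := y))]
            · have hbn : (0:ℝ) ≤ |τ x - τ y| := abs_nonneg _
              nlinarith [hsum2, hτdiff, Finset.sum_nonneg
                (fun i (_ : i ∈ Finset.univ) => abs_nonneg (hv y i - 1 / ((m:ℝ) + 2)))]
        _ ≤ 6 * ((m:ℝ) + 2) * (s * lam) * dist x y := by
            have hX : (0:ℝ) ≤ s * lam * dist x y * ((m:ℝ) + 1) :=
              mul_nonneg (mul_nonneg hsl0.le dist_nonneg) (by linarith)
            have he : 6 * ((m:ℝ) + 2) * (s * lam) * dist x y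
                - (3 / 2 * (s * lam * dist x y) + 9 / 4 * ((m:ℝ) + 2) * (s * lam) * dist x y * 2)
                = 3 / 2 * (s * lam * dist x y * ((m:ℝ) + 1)) := by ring
            linarith
    -- the interpolation weight
    set α : X → ℝ := fun x => max 0 (min 1 (12 * ((m:ℝ) + 2) * μ x - 3)) with hαdef
    have hα0' : ∀ x, 0 ≤ α x := fun x => le_max_left _ _
    have hα1' : ∀ x, α x ≤ 1 := fun x => max_le (by norm_num) (min_le_left _ _)
    have hαzero : ∀ x, μ x ≤ 3 * q → α x = 0 := by
      intro x hx
      have harg : 12 * ((m:ℝ) + 2) * μ x - 3 ≤ 0 := by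
        have h2 : ((m:ℝ) + 2) * μ x ≤ ((m:ℝ) + 2) * (3 * q) :=
          mul_le_mul_of_nonneg_left hx hnpos.le
        have h3 : ((m:ℝ) + 2) * (3 * q) = 1/4 := by
          rw [show ((m:ℝ) + 2) * (3 * q) = 3 * (((m:ℝ) + 2) * q) by ring, hnq]
          norm_num
        nlinarith
      have : min 1 (12 * ((m:ℝ) + 2) * μ x - 3) ≤ 0 := le_trans (min_le_right _ _) harg
      exact max_eq_left this
    have hαone : ∀ x, 4 * q ≤ μ x → α x = 1 := by
      intro x hx
      have harg : 1 ≤ 12 * ((m:ℝ) + 2) * μ x - 3 := by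
        have h2 : ((m:ℝ) + 2) * (4 * q) ≤ ((m:ℝ) + 2) * μ x :=
          mul_le_mul_of_nonneg_left hx hnpos.le
        have h3 : ((m:ℝ) + 2) * (4 * q) = 1/3 := by
          rw [show ((m:ℝ) + 2) * (4 * q) = 4 * (((m:ℝ) + 2) * q) by ring, hnq]
          norm_num
        nlinarith
      rw [hαdef]
      show max 0 (min 1 (12 * ((m:ℝ) + 2) * μ x - 3)) = 1
      rw [min_eq_left harg]
      exact max_eq_right (by norm_num)
    have hαlip : ∀ x y, |α x - α y| ≤ 12 * ((m:ℝ) + 2) * (s * lam) * dist x y := by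
      intro x y
      have step1 : |α x - α y| ≤ |min 1 (12 * ((m:ℝ) + 2) * μ x - 3)
          - min 1 (12 * ((m:ℝ) + 2) * μ y - 3)| := by
        rw [hαdef]
        show |max 0 (min 1 _) - max 0 (min 1 _)| ≤ _
        rw [max_comm 0 (min 1 (12 * ((m:ℝ) + 2) * μ x - 3)),
          max_comm 0 (min 1 (12 * ((m:ℝ) + 2) * μ y - 3))]
        exact abs_max_sub_max_le_abs _ _ _
      have step2 : |min 1 (12 * ((m:ℝ) + 2) * μ x - 3)
          - min 1 (12 * ((m:ℝ) + 2) * μ y - 3)| ≤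
          |(12 * ((m:ℝ) + 2) * μ x - 3) - (12 * ((m:ℝ) + 2) * μ y - 3)| := by
        refine le_trans (abs_min_sub_min_le_max _ _ _ _) ?_
        rw [sub_self, abs_zero]
        exact max_le (abs_nonneg _) le_rfl
      have step3 : |(12 * ((m:ℝ) + 2) * μ x - 3) - (12 * ((m:ℝ) + 2) * μ y - 3)|
          = 12 * ((m:ℝ) + 2) * |μ x - μ y| := by
        rw [show (12 * ((m:ℝ) + 2) * μ x - 3) - (12 * ((m:ℝ) + 2) * μ y - 3)
          = 12 * ((m:ℝ) + 2) * (μ x - μ y) by ring, abs_mul]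
        congr 1
        rw [abs_of_pos (by positivity)]
      calc |α x - α y| ≤ 12 * ((m:ℝ) + 2) * |μ x - μ y| :=
            le_trans step1 (le_trans step2 (le_of_eq step3))
        _ ≤ 12 * ((m:ℝ) + 2) * (s * lam * dist x y) :=
            mul_le_mul_of_nonneg_left (hμlip x y) (by positivity)
        _ = 12 * ((m:ℝ) + 2) * (s * lam) * dist x y := by ring
    -- the final map p
    set p : X → Fin (m+2) → ℝ := fun x i => (1 - α x) * G x i + α x * ν x i with hpdef
    have hp0 : ∀ x i, 0 ≤ p x i := by
      intro x i
      have h1 := hα0' x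
      have h2 := hα1' x
      exact add_nonneg (mul_nonneg (by linarith) (hG0 x i)) (mul_nonneg h1 (hν0 x i))
    have hp1 : ∀ x, ∑ i, p x i = 1 := by
      intro x
      show ∑ i, ((1 - α x) * G x i + α x * ν x i) = 1
      rw [Finset.sum_add_distrib, ← Finset.mul_sum, ← Finset.mul_sum, hGsum x, hν1 x]
      ring
    have hpz : ∀ x, ∃ i, p x i = 0 := by
      intro x
      rcases le_or_gt (μ x) (4 * q) with hcase | hcase
      · obtain ⟨i, hi⟩ := hμmem x
        have hGi : G x i = 0 := hGzero x i hi hcase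
        refine ⟨i, ?_⟩
        rcases le_or_gt (μ x) (3 * q) with h3 | h3
        · show (1 - α x) * G x i + α x * ν x i = 0
          rw [hαzero x h3, hGi]
          ring
        · have hνi : ν x i = 0 := by
            by_contra hne'
            have hposv : 0 < ν x i := lt_of_le_of_ne (hν0 x i) (Ne.symm hne')
            have hxU := hνsupp x i hposv
            rcases hxU with hl | hr'
            · have hl' : μ x + 4 * q ≤ hv x i := hl
              rw [hi] at hl'
              linarith
            · have hr'' : 5 * q ≤ μ x := hr'
              linarith
          show (1 - α x) * G x i + α x * ν x i = 0
          rw [hGi, hνi]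
          ring
      · obtain ⟨i, hνi⟩ := hνz x
        refine ⟨i, ?_⟩
        show (1 - α x) * G x i + α x * ν x i = 0
        rw [hαone x hcase.le, hνi]
        ring
    have hpA : ∀ a : A, ∀ i, p (a : X) i = (f a : PiLp 1 fun _ : Fin (m+2) => ℝ) i := by
      intro a i
      have hval : ∀ j, hv (a : X) j = (f a : PiLp 1 fun _ : Fin (m+2) => ℝ) j := by
        intro j
        have h' := congrArg Subtype.val (hhA a)
        exact congrArg (fun v : PiLp 1 (fun _ : Fin (m+2) => ℝ) => v j) h'
      have hμa : μ (a : X) = 0 := by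
        obtain ⟨j, hj⟩ := (f a).2.2
        refine le_antisymm ?_ (hμ0 _)
        calc μ (a : X) ≤ hv (a : X) j := hμle _ j
          _ = 0 := by rw [hval j, hj]
      have hαa : α (a : X) = 0 := hαzero _ (by rw [hμa]; positivity)
      have hμba : μb (a : X) = 0 := by
        rw [hμbdef]
        show min (μ (a : X)) (4 * q) = 0
        rw [hμa]
        exact min_eq_left (by positivity)
      have hτa : τ (a : X) = 1 := by
        rw [hτdef]
        show (1 - ((m:ℝ) + 2) * μb (a : X))⁻¹ = 1
        rw [hμba]
        norm_num
      show (1 - α (a : X)) * G (a : X) i + α (a : X) * ν (a : X) i = _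
      rw [hαa]
      have hGa : G (a : X) i = hv (a : X) i := by
        show 1 / ((m:ℝ) + 2) + τ (a : X) * (hv (a : X) i - 1 / ((m:ℝ) + 2)) = hv (a : X) i
        rw [hτa]
        ring
      rw [hGa, hval i]
      ring
    -- Lipschitz bound for p
    have hν2 : ∀ y : X, ∑ i, |ν y i - G y i| ≤ 2 := by
      intro y
      calc ∑ i, |ν y i - G y i| ≤ ∑ i, (ν y i + G y i) := by
            refine Finset.sum_le_sum fun i _ => ?_
            rw [abs_sub_le_iff]
            constructor
            · linarith [hν0 y i, hG0 y i]
            · linarith [hν0 y i, hG0 y i]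
        _ = 2 := by rw [Finset.sum_add_distrib, hν1 y, hGsum y]; norm_num
    have hplip : ∀ x y, ∑ i, |p x i - p y i| ≤
        (30 * ((m:ℝ) + 2) * (s * lam) + 48 * ((m:ℝ) + 1) * ((m:ℝ) + 2) * (s * lam) / t)
          * dist x y := by
      intro x y
      have hKν : 4 * ((m:ℝ) + 1) / (t * r) = 48 * ((m:ℝ) + 1) * ((m:ℝ) + 2) * (s * lam) / t := by
        rw [hrdef]
        field_simp
        ring
      have hid : ∀ i, p x i - p y i = (1 - α x) * (G x i - G y i) + α x * (ν x i - ν y i)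
          + (α x - α y) * (ν y i - G y i) := by
        intro i
        show ((1 - α x) * G x i + α x * ν x i) - ((1 - α y) * G y i + α y * ν y i) = _
        ring
      calc ∑ i, |p x i - p y i|
          ≤ ∑ i, ((1 - α x) * |G x i - G y i| + α x * |ν x i - ν y i|
              + |α x - α y| * |ν y i - G y i|) := by
            refine Finset.sum_le_sum fun i _ => ?_
            rw [hid i]
            refine le_trans (abs_add_le _ _) ?_
            refine add_le_add (le_trans (abs_add_le _ _) ?_) ?_
            · refine add_le_add ?_ ?_
              · rw [abs_mul, abs_of_nonneg (by linarith [hα1' x])]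
              · rw [abs_mul, abs_of_nonneg (hα0' x)]
            · rw [abs_mul]
        _ = (1 - α x) * (∑ i, |G x i - G y i|) + α x * (∑ i, |ν x i - ν y i|)
            + |α x - α y| * (∑ i, |ν y i - G y i|) := by
            rw [Finset.sum_add_distrib, Finset.sum_add_distrib, ← Finset.mul_sum,
              ← Finset.mul_sum, ← Finset.mul_sum]
        _ ≤ 1 * (6 * ((m:ℝ) + 2) * (s * lam) * dist x y)
            + 1 * ((4 * ((m:ℝ) + 1) / (t * r)) * dist x y)
            + (12 * ((m:ℝ) + 2) * (s * lam) * dist x y) * 2 := by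
            refine add_le_add (add_le_add ?_ ?_) ?_
            · have hb1 : (0:ℝ) ≤ ∑ i, |G x i - G y i| :=
                Finset.sum_nonneg fun i _ => abs_nonneg _
              have hb2 : 1 - α x ≤ 1 := by linarith [hα0' x]
              have hb3 : 0 ≤ 1 - α x := by linarith [hα1' x]
              nlinarith [hGlip x y]
            · have hb1 : (0:ℝ) ≤ ∑ i, |ν x i - ν y i| :=
                Finset.sum_nonneg fun i _ => abs_nonneg _
              nlinarith [hνlip x y, hα0' x, hα1' x]
            · have hb1 : (0:ℝ) ≤ |α x - α y| := abs_nonneg _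
              nlinarith [hν2 y, hαlip x y, Finset.sum_nonneg
                (fun i (_ : i ∈ Finset.univ) => abs_nonneg (ν y i - G y i))]
        _ = (30 * ((m:ℝ) + 2) * (s * lam)) * dist x y
            + (4 * ((m:ℝ) + 1) / (t * r)) * dist x y := by ring
        _ = _ := by rw [hKν]; ring
    -- assemble
    refine ⟨fun x => ⟨WithLp.toLp 1 (p x), ⟨⟨hp0 x, hp1 x⟩, hpz x⟩⟩, ?_, ?_⟩
    · intro a
      apply Subtype.ext
      show (WithLp.toLp 1 (p (a : X)) : PiLp 1 fun _ : Fin (m+2) => ℝ) = _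
      ext i
      exact hpA a i
    · intro x y
      rw [Subtype.dist_eq, l1dist_aux]
      refine le_trans (hplip x y) ?_
      have hA1 : 30 * ((m:ℝ) + 2) * s ≤ 50 * ((m:ℝ) + 2)^2 * s := by nlinarith
      have hA2 : 48 * ((m:ℝ) + 1) * ((m:ℝ) + 2) * s / t ≤ 150 * s^2 * ((m:ℝ) + 2)^5 / t := by
        rw [div_le_div_iff₀ ht ht]
        have hm1n : (m:ℝ) + 1 ≤ (m:ℝ) + 2 := by linarith
        have hn1 : (1:ℝ) ≤ (m:ℝ) + 2 := by linarith
        have hp25 : ((m:ℝ)+2)^2 ≤ ((m:ℝ)+2)^5 := pow_le_pow_right₀ hn1 (by norm_num)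
        have hss : s ≤ s^2 := by nlinarith
        have hstep1 : ((m:ℝ)+1)*((m:ℝ)+2)*s ≤ (((m:ℝ)+2)*((m:ℝ)+2))*s :=
          mul_le_mul_of_nonneg_right (mul_le_mul_of_nonneg_right hm1n hnpos.le) hs.le
        have hstep2 : ((m:ℝ)+2)^2*s ≤ ((m:ℝ)+2)^5*s := mul_le_mul_of_nonneg_right hp25 hs.le
        have hstep3 : ((m:ℝ)+2)^5*s ≤ ((m:ℝ)+2)^5*s^2 :=
          mul_le_mul_of_nonneg_left hss (pow_nonneg hnpos.le 5)
        have hbase : 48 * ((m:ℝ) + 1) * ((m:ℝ) + 2) * s ≤ 150 * s^2 * ((m:ℝ) + 2)^5 := by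
          nlinarith [hstep1, hstep2, hstep3]
        nlinarith [mul_le_mul_of_nonneg_right hbase ht.le]
      have hcoef : 30 * ((m:ℝ) + 2) * (s * lam) + 48 * ((m:ℝ) + 1) * ((m:ℝ) + 2) * (s * lam) / t
          ≤ (50 * ((m:ℝ) + 2) ^ 2 * s + 150 * s ^ 2 * ((m:ℝ) + 2) ^ 5 / t) * lam := by
        have he1 : 30 * ((m:ℝ) + 2) * (s * lam) + 48 * ((m:ℝ) + 1) * ((m:ℝ) + 2) * (s * lam) / t
            = (30 * ((m:ℝ) + 2) * s + 48 * ((m:ℝ) + 1) * ((m:ℝ) + 2) * s / t) * lam := by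
          field_simp
        rw [he1]
        exact mul_le_mul_of_nonneg_right (by linarith) hlam0.le
      exact mul_le_mul_of_nonneg_right hcoef dist_nonneg
end

section
/- Let X be a metric space, n ≥ 0 an integer, 0 < t < 1, and r₂ > r₁ > 0. If every r-Lebesgue cover U = {U_0,…,U_{n+1}} of X by n+2 subsets with r₁ < r < r₂ admits a (4t·r)-Lebesgue refinement V of multiplicity at most n+1, then every s-Lebesgue cover W = {W_0,…,W_{n+2}} of X by n+3 subsets with 4r₁ < s < 4r₂ admits a (t·s)-Lebesgue refinement of multiplicity at most n+2. -/
set_option maxHeartbeats 1000000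

theorem lebesgue_refinement_step
    {X : Type*} [MetricSpace X] (n : ℕ) (t r₁ r₂ : ℝ)
    (ht0 : 0 < t) (ht1 : t < 1) (hr₁ : 0 < r₁) (hr : r₁ < r₂)
    (h : ∀ r : ℝ, r₁ < r → r < r₂ →
      ∀ U : Fin (n + 2) → Set X, (∀ x : X, ∃ i, Metric.ball x r ⊆ U i) →
        ∃ V : Set (Set X),
          (∀ W ∈ V, ∃ i, W ⊆ U i) ∧
          MultiplicityLE V (n + 1) ∧
          (∀ x : X, ∃ W ∈ V, Metric.ball x (4 * t * r) ⊆ W)) :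
    ∀ s : ℝ, 4 * r₁ < s → s < 4 * r₂ →
      ∀ W : Fin (n + 3) → Set X, (∀ x : X, ∃ i, Metric.ball x s ⊆ W i) →
        ∃ V : Set (Set X),
          (∀ Z ∈ V, ∃ i, Z ⊆ W i) ∧
          MultiplicityLE V (n + 2) ∧
          (∀ x : X, ∃ Z ∈ V, Metric.ball x (t * s) ⊆ Z) := by
  classical
  intro s hs1 hs2 W hW
  have hs0 : 0 < s := by linarith
  have hts0 : 0 < t * s := mul_pos ht0 hs0
  have hrlo : r₁ < s / 4 := by linarith
  have hrhi : s / 4 < r₂ := by linarith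
  -- deep sets and their neighborhoods
  set T : Fin (n + 3) → Set X := fun j => {z | Metric.ball z s ⊆ W j} with hTdef
  set N : Fin (n + 3) → Set X :=
    fun j => ⋃ (z : X) (_ : z ∈ T j), Metric.ball z (s / 4) with hNdef
  have hNW : ∀ j, N j ⊆ W j := by
    intro j w hw
    simp only [hNdef, Set.mem_iUnion] at hw
    obtain ⟨z, hz, hw⟩ := hw
    exact hz (Metric.ball_subset_ball (by linarith) hw)
  -- the merged (n+2)-indexed cover
  set i1 : Fin (n + 3) := ⟨n + 1, by omega⟩ with hi1
  set i2 : Fin (n + 3) := ⟨n + 2, by omega⟩ with hi2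
  set G : Fin (n + 2) → Set X :=
    fun k => if (k : ℕ) < n + 1 then N ⟨k.1, Nat.lt_succ_of_lt k.2⟩ else N i1 ∪ N i2
    with hGdef
  have hGlow : ∀ (k : Fin (n + 2)) (hk : (k : ℕ) < n + 1),
      G k = N ⟨k.1, by omega⟩ := by
    intro k hk
    simp only [hGdef]
    rw [if_pos hk]
  have hGhigh : ∀ (k : Fin (n + 2)), ¬ ((k : ℕ) < n + 1) → G k = N i1 ∪ N i2 := by
    intro k hk
    simp only [hGdef]
    rw [if_neg hk]
  have hGcov : ∀ x : X, ∃ k, Metric.ball x (s / 4) ⊆ G k := by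
    intro x
    obtain ⟨i, hi⟩ := hW x
    have hxT : x ∈ T i := hi
    have hsub : Metric.ball x (s / 4) ⊆ N i := by
      intro y hy
      simp only [hNdef, Set.mem_iUnion]
      exact ⟨x, hxT, hy⟩
    by_cases hic : (i : ℕ) < n + 1
    · refine ⟨⟨(i : ℕ), by omega⟩, ?_⟩
      rw [hGlow ⟨(i : ℕ), by omega⟩ hic]
      have : (⟨(i : ℕ), by omega⟩ : Fin (n + 3)) = i := by
        apply Fin.ext; rfl
      rw [this]
      exact hsub
    · refine ⟨⟨n + 1, by omega⟩, ?_⟩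
      rw [hGhigh ⟨n + 1, by omega⟩ (by simp)]
      have hii : (i : ℕ) = n + 1 ∨ (i : ℕ) = n + 2 := by
        have := i.isLt; omega
      rcases hii with hii | hii
      · have : i = i1 := by apply Fin.ext; simp [hi1, hii]
        rw [this] at hsub
        exact hsub.trans Set.subset_union_left
      · have : i = i2 := by apply Fin.ext; simp [hi2, hii]
        rw [this] at hsub
        exact hsub.trans Set.subset_union_right
  -- apply the hypothesis
  obtain ⟨V₀, href, hmultV₀, hlebV₀⟩ := h (s / 4) hrlo hrhi G hGcov
  have h4teq : 4 * t * (s / 4) = t * s := by ring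
  rw [h4teq] at hlebV₀
  choose Zx hZmem hZball using hlebV₀
  have hσex : ∀ Z : Set X, ∃ k : Fin (n + 2), Z ∈ V₀ → Z ⊆ G k := by
    intro Z
    by_cases hZ : Z ∈ V₀
    · obtain ⟨k, hk⟩ := href Z hZ
      exact ⟨k, fun _ => hk⟩
    · exact ⟨0, fun hc => absurd hc hZ⟩
  choose σ hσ using hσex
  have hGx : ∀ x : X, Zx x ⊆ G (σ (Zx x)) := fun x => hσ _ (hZmem x)
  -- the reach bound
  obtain ⟨ρ, hρ1, hρ2⟩ : ∃ ρ : ℝ,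
      (∀ a b : X, dist a b < t * s → dist a b ≤ ρ) ∧ ρ + s / 4 < s := by
    by_cases ht34 : t < 3 / 4
    · refine ⟨t * s, fun a b hab => le_of_lt hab, ?_⟩
      nlinarith
    · push_neg at ht34
      have h4t1 : (1 : ℝ) < 4 * t := by linarith
      have h4tpos : (0 : ℝ) < 4 * t := by linarith
      have hminpos : 0 < min (s / 64) ((r₂ - r₁) / 2) :=
        lt_min (by positivity) (by linarith)
      set r' : ℝ := r₁ + min (s / 64) ((r₂ - r₁) / 2) with hr'def
      have hr'1 : r₁ < r' := by
        simp only [hr'def]; linarith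
      have hr'2 : r' < r₂ := by
        have h1 := min_le_right (s / 64) ((r₂ - r₁) / 2)
        simp only [hr'def]; linarith
      have hr'pos : 0 < r' := lt_trans hr₁ hr'1
      have hr'le : r' ≤ r₁ + s / 64 := by
        have h1 := min_le_left (s / 64) ((r₂ - r₁) / 2)
        simp only [hr'def]; linarith
      refine ⟨2 * r' + 2 * (s / 64), ?_, by linarith⟩
      intro a b hab
      by_contra hgt
      push_neg at hgt
      set d := dist a b with hddef
      set ρ₀ : ℝ := d - 2 * r' - s / 64 with hρ₀def
      have hρ₀pos : 0 < ρ₀ := by simp only [hρ₀def]; linarith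
      set lam : ℝ := (t * s + 4 * t * r₂) / 2 with hlamdef
      have hlam1 : t * s < lam := by nlinarith
      have hlam2 : lam < 4 * t * r₂ := by nlinarith
      have hlampos : 0 < lam := lt_trans hts0 hlam1
      set U : Fin (n + 2) → Set X :=
        fun k => if k = 0 then {w : X | ρ₀ < dist w a} else {w : X | dist w a < ρ₀ + 2 * r'}
        with hUdef
      have hUcov : ∀ z : X, ∃ k, Metric.ball z r' ⊆ U k := by
        intro z
        by_cases hz : ρ₀ + r' < dist z a
        · refine ⟨0, ?_⟩
          intro w hw
          simp only [hUdef, if_pos rfl, Set.mem_setOf_eq]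
          have h1 : dist w z < r' := Metric.mem_ball.mp hw
          have h2 := dist_triangle z w a
          have h3 : dist z w < r' := by rw [dist_comm]; exact h1
          linarith
        · push_neg at hz
          refine ⟨1, ?_⟩
          intro w hw
          have hne : (1 : Fin (n + 2)) ≠ 0 := by
            simp [Fin.ext_iff]
          simp only [hUdef, if_neg hne, Set.mem_setOf_eq]
          have h1 : dist w z < r' := Metric.mem_ball.mp hw
          have h2 := dist_triangle w z a
          linarith
      have hstep : ∀ rr : ℝ, r₁ < rr → rr < r₂ →
          (∀ z : X, ∃ k, Metric.ball z rr ⊆ U k) →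
          ∀ z : X, ∃ k, Metric.ball z (4 * t * rr) ⊆ U k := by
        intro rr hA hB hcov z
        obtain ⟨V', hrf, _, hlb⟩ := h rr hA hB U hcov
        obtain ⟨Z, hZ, hb⟩ := hlb z
        obtain ⟨k, hk⟩ := hrf Z hZ
        exact ⟨k, hb.trans hk⟩
      set μ : ℝ := lam / (4 * t) with hμdef
      have hμ1 : r₁ < μ := by
        rw [hμdef, lt_div_iff₀ h4tpos]; nlinarith
      have hμ2 : μ < r₂ := by
        rw [hμdef, div_lt_iff₀ h4tpos]; nlinarith
      have hμr : 4 * t * μ = lam := by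
        rw [hμdef]; field_simp
      have hμpos : 0 < μ := lt_trans hr₁ hμ1
      have hind : ∀ K : ℕ, ∀ z : X, ∃ k,
          Metric.ball z (min (r' * (4 * t) ^ K) μ) ⊆ U k := by
        intro K
        induction K with
        | zero =>
          intro z
          obtain ⟨k, hk⟩ := hUcov z
          refine ⟨k, (Metric.ball_subset_ball ?_).trans hk⟩
          rw [pow_zero, mul_one]
          exact min_le_left _ _
        | succ K ih =>
          intro z
          have hpow1 : (1 : ℝ) ≤ (4 * t) ^ K := one_le_pow₀ (le_of_lt h4t1)
          have hrr1 : r₁ < min (r' * (4 * t) ^ K) μ :=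
            lt_min (lt_of_lt_of_le hr'1
              (le_mul_of_one_le_right (le_of_lt hr'pos) hpow1)) hμ1
          have hrr2 : min (r' * (4 * t) ^ K) μ < r₂ :=
            lt_of_le_of_lt (min_le_right _ _) hμ2
          obtain ⟨k, hk⟩ := hstep _ hrr1 hrr2 ih z
          refine ⟨k, (Metric.ball_subset_ball ?_).trans hk⟩
          rcases le_total (r' * (4 * t) ^ K) μ with hc | hc
          · rw [min_eq_left hc]
            calc min (r' * (4 * t) ^ (K + 1)) μ ≤ r' * (4 * t) ^ (K + 1) :=
                  min_le_left _ _
              _ = 4 * t * (r' * (4 * t) ^ K) := by ring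
          · rw [min_eq_right hc]
            calc min (r' * (4 * t) ^ (K + 1)) μ ≤ μ := min_le_right _ _
              _ ≤ 4 * t * μ := by nlinarith
      obtain ⟨K, hK⟩ := pow_unbounded_of_one_lt (μ / r') h4t1
      have hKμ : μ ≤ r' * (4 * t) ^ K := by
        rw [div_lt_iff₀ hr'pos] at hK
        nlinarith
      have hfinal0 : ∀ z : X, ∃ k, Metric.ball z μ ⊆ U k := by
        intro z
        obtain ⟨k, hk⟩ := hind K z
        rw [min_eq_right hKμ] at hk
        exact ⟨k, hk⟩
      obtain ⟨k, hk⟩ := hstep μ hμ1 hμ2 hfinal0 a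
      rw [hμr] at hk
      by_cases hk0 : k = 0
      · have ha : a ∈ Metric.ball a lam := Metric.mem_ball_self hlampos
        have h2 := hk ha
        rw [hk0] at h2
        simp only [hUdef, if_pos rfl, Set.mem_setOf_eq, dist_self] at h2
        linarith
      · have hb : b ∈ Metric.ball a lam := by
          rw [Metric.mem_ball, dist_comm]
          exact lt_trans hab hlam1
        have h2 := hk hb
        simp only [hUdef, if_neg hk0, Set.mem_setOf_eq] at h2
        rw [dist_comm] at h2
        simp only [hρ₀def] at h2
        linarith
  -- the final family
  set close1 : X → Prop := fun x => ∃ z, z ∈ T i1 ∧ dist x z < s / 4 with hclosedef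
  set Y : ℕ → Set X :=
    fun m => ⋃ (x : X) (_ : (σ (Zx x) : ℕ) = m), Metric.ball x (t * s) with hYdef
  set D₁ : Set X :=
    ⋃ (x : X) (_ : (σ (Zx x) : ℕ) = n + 1 ∧ close1 x), Metric.ball x (t * s) with hD₁def
  set D₂ : Set X :=
    ⋃ (x : X) (_ : (σ (Zx x) : ℕ) = n + 1 ∧ ¬ close1 x), Metric.ball x (t * s) with hD₂def
  refine ⟨(Y '' Set.Iic n) ∪ {D₁, D₂}, ?_, ?_, ?_⟩
  · -- refinement
    rintro M hM
    rcases hM with ⟨m, hm, rfl⟩ | hM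
    · -- Y m ⊆ W ⟨m, _⟩
      have hm' : m ≤ n := Set.mem_Iic.mp hm
      refine ⟨⟨m, by omega⟩, ?_⟩
      intro w hw
      simp only [hYdef, Set.mem_iUnion] at hw
      obtain ⟨x, hx, hw⟩ := hw
      have h1 : w ∈ Zx x := hZball x hw
      have h2 := hGx x h1
      have hlt : ((σ (Zx x) : ℕ)) < n + 1 := by omega
      rw [hGlow _ hlt] at h2
      have hidx : (⟨(σ (Zx x) : ℕ), by omega⟩ : Fin (n + 3)) = ⟨m, by omega⟩ := by
        apply Fin.ext; simp [hx]
      rw [hidx] at h2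
      exact hNW _ h2
    · rcases hM with rfl | hM
      · -- D₁ ⊆ W i1
        refine ⟨i1, ?_⟩
        intro w hw
        simp only [hD₁def, Set.mem_iUnion] at hw
        obtain ⟨x, ⟨hxv, z, hzT, hxz⟩, hw⟩ := hw
        have h1 : dist w x ≤ ρ := hρ1 w x (Metric.mem_ball.mp hw)
        have h2 : dist w z < s := by
          have h3 := dist_triangle w x z
          linarith
        exact hzT (Metric.mem_ball.mpr h2)
      · -- D₂ ⊆ W i2
        rw [Set.mem_singleton_iff] at hM
        subst hM
        refine ⟨i2, ?_⟩
        intro w hw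
        simp only [hD₂def, Set.mem_iUnion] at hw
        obtain ⟨x, ⟨hxv, hnc⟩, hw⟩ := hw
        have hx1 : x ∈ Zx x := hZball x (Metric.mem_ball_self hts0)
        have hx2 := hGx x hx1
        rw [hGhigh _ (by omega)] at hx2
        have hx3 : x ∈ N i2 := by
          rcases hx2 with hx2 | hx2
          · exfalso
            apply hnc
            simp only [hNdef, Set.mem_iUnion] at hx2
            obtain ⟨z, hzT, hxz⟩ := hx2
            exact ⟨z, hzT, Metric.mem_ball.mp hxz⟩
          · exact hx2
        simp only [hNdef, Set.mem_iUnion] at hx3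
        obtain ⟨z, hzT, hxz⟩ := hx3
        have h1 : dist w x ≤ ρ := hρ1 w x (Metric.mem_ball.mp hw)
        have hxz' : dist x z < s / 4 := Metric.mem_ball.mp hxz
        have h2 : dist w z < s := by
          have h3 := dist_triangle w x z
          linarith
        exact hzT (Metric.mem_ball.mpr h2)
  · -- multiplicity
    intro w
    have hVfin : ((Y '' Set.Iic n) ∪ {D₁, D₂} : Set (Set X)).Finite :=
      ((Set.finite_Iic n).image Y).union ((Set.finite_singleton D₂).insert D₁)
    have hSfin : {M | M ∈ ((Y '' Set.Iic n) ∪ {D₁, D₂}) ∧ w ∈ interior M}.Finite :=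
      hVfin.subset (fun M hM => hM.1)
    refine ⟨hSfin, ?_⟩
    obtain ⟨hZfin, hZcard⟩ := hmultV₀ w
    set S := {M | M ∈ ((Y '' Set.Iic n) ∪ {D₁, D₂}) ∧ w ∈ interior M} with hSdef
    set Zc := {Z | Z ∈ V₀ ∧ w ∈ interior Z} with hZcdef
    have hYopen : ∀ m, IsOpen (Y m) := fun m =>
      isOpen_iUnion fun x => isOpen_iUnion fun _ => Metric.isOpen_ball
    have hD₁open : IsOpen D₁ :=
      isOpen_iUnion fun x => isOpen_iUnion fun _ => Metric.isOpen_ball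
    have hD₂open : IsOpen D₂ :=
      isOpen_iUnion fun x => isOpen_iUnion fun _ => Metric.isOpen_ball
    have key : ∀ M, M ∈ S → M ≠ D₁ → M ≠ D₂ →
        ∃ Z, Z ∈ Zc ∧ (σ Z : ℕ) ≤ n ∧ M = Y (σ Z : ℕ) := by
      intro M hM hM1 hM2
      obtain ⟨hMV, hMw⟩ := hM
      rcases hMV with ⟨m, hm, rfl⟩ | hMD
      · rw [(hYopen m).interior_eq] at hMw
        simp only [hYdef, Set.mem_iUnion] at hMw
        obtain ⟨x, hx, hw⟩ := hMw
        refine ⟨Zx x, ⟨hZmem x, ?_⟩, ?_, ?_⟩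
        · exact interior_maximal (hZball x) Metric.isOpen_ball hw
        · rw [hx]; exact Set.mem_Iic.mp hm
        · rw [hx]
      · exfalso
        rcases hMD with rfl | hMD
        · exact hM1 rfl
        · rw [Set.mem_singleton_iff] at hMD
          exact hM2 hMD
    set f : Set X → Set X := fun M =>
      if hex : ∃ Z, Z ∈ Zc ∧ (σ Z : ℕ) ≤ n ∧ M = Y (σ Z : ℕ) then hex.choose else ∅
      with hfdef
    have hfspec : ∀ M, M ∈ S → M ≠ D₁ → M ≠ D₂ →
        f M ∈ Zc ∧ (σ (f M) : ℕ) ≤ n ∧ M = Y (σ (f M) : ℕ) := by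
      intro M h1 h2 h3
      have hex := key M h1 h2 h3
      simp only [hfdef, dif_pos hex]
      exact hex.choose_spec
    have hinj : Set.InjOn f (S \ {D₁, D₂}) := by
      intro M hM M' hM' hMM'
      have hne : M ≠ D₁ ∧ M ≠ D₂ := by
        constructor <;> (intro hc; exact hM.2 (by simp [hc]))
      have hne' : M' ≠ D₁ ∧ M' ≠ D₂ := by
        constructor <;> (intro hc; exact hM'.2 (by simp [hc]))
      have s1 := hfspec M hM.1 hne.1 hne.2
      have s2 := hfspec M' hM'.1 hne'.1 hne'.2
      rw [s1.2.2, s2.2.2, hMM']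
    have hSsplit : S ⊆ (S \ {D₁, D₂}) ∪ {D₁, D₂} := by
      intro M hM
      by_cases hMD : M ∈ ({D₁, D₂} : Set (Set X))
      · exact Or.inr hMD
      · exact Or.inl ⟨hM, hMD⟩
    have hcard2 : ({D₁, D₂} : Set (Set X)).ncard ≤ 2 := by
      have := Set.ncard_insert_le D₁ ({D₂} : Set (Set X))
      simp only [Set.ncard_singleton] at this
      omega
    by_cases hD : w ∈ interior D₁ ∨ w ∈ interior D₂
    · have hZstar : ∃ Zs, Zs ∈ Zc ∧ (σ Zs : ℕ) = n + 1 := by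
        rcases hD with hD | hD
        · rw [hD₁open.interior_eq] at hD
          simp only [hD₁def, Set.mem_iUnion] at hD
          obtain ⟨x, ⟨hxv, _⟩, hw⟩ := hD
          exact ⟨Zx x, ⟨hZmem x, interior_maximal (hZball x) Metric.isOpen_ball hw⟩, hxv⟩
        · rw [hD₂open.interior_eq] at hD
          simp only [hD₂def, Set.mem_iUnion] at hD
          obtain ⟨x, ⟨hxv, _⟩, hw⟩ := hD
          exact ⟨Zx x, ⟨hZmem x, interior_maximal (hZball x) Metric.isOpen_ball hw⟩, hxv⟩
      obtain ⟨Zs, hZsZc, hZsv⟩ := hZstar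
      have hmaps : ∀ M ∈ (S \ {D₁, D₂}), f M ∈ (Zc \ {Zs}) := by
        intro M hM
        have hne : M ≠ D₁ ∧ M ≠ D₂ := by
          constructor <;> (intro hc; exact hM.2 (by simp [hc]))
        have spec := hfspec M hM.1 hne.1 hne.2
        refine ⟨spec.1, ?_⟩
        intro hEq
        rw [Set.mem_singleton_iff] at hEq
        rw [hEq, hZsv] at spec
        omega
      have hc1 : (S \ {D₁, D₂}).ncard ≤ (Zc \ {Zs}).ncard :=
        Set.ncard_le_ncard_of_injOn f hmaps hinj hZfin.diff
      have hc2 : (Zc \ {Zs}).ncard = Zc.ncard - 1 :=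
        Set.ncard_diff_singleton_of_mem hZsZc
      have hc3 : S.ncard ≤ (S \ {D₁, D₂}).ncard + 2 := by
        calc S.ncard ≤ ((S \ {D₁, D₂}) ∪ {D₁, D₂}).ncard :=
              Set.ncard_le_ncard hSsplit
                (hSfin.diff.union ((Set.finite_singleton D₂).insert D₁))
          _ ≤ (S \ {D₁, D₂}).ncard + ({D₁, D₂} : Set (Set X)).ncard :=
              Set.ncard_union_le _ _
          _ ≤ (S \ {D₁, D₂}).ncard + 2 := by omega
      omega
    · push_neg at hD
      have hSeq : S = S \ {D₁, D₂} := by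
        ext M
        constructor
        · intro hM
          refine ⟨hM, ?_⟩
          rintro (rfl | hMD)
          · exact hD.1 hM.2
          · rw [Set.mem_singleton_iff] at hMD
            subst hMD
            exact hD.2 hM.2
        · exact fun hM => hM.1
      have hmaps : ∀ M ∈ (S \ {D₁, D₂}), f M ∈ Zc := by
        intro M hM
        have hne : M ≠ D₁ ∧ M ≠ D₂ := by
          constructor <;> (intro hc; exact hM.2 (by simp [hc]))
        exact (hfspec M hM.1 hne.1 hne.2).1
      have hc1 : (S \ {D₁, D₂}).ncard ≤ Zc.ncard :=
        Set.ncard_le_ncard_of_injOn f hmaps hinj hZfin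
      rw [hSeq]
      omega
  · -- Lebesgue property
    intro x
    by_cases hv : (σ (Zx x) : ℕ) ≤ n
    · refine ⟨Y (σ (Zx x) : ℕ), Or.inl ⟨_, Set.mem_Iic.mpr hv, rfl⟩, ?_⟩
      intro y hy
      simp only [hYdef, Set.mem_iUnion]
      exact ⟨x, rfl, hy⟩
    · have hv' : (σ (Zx x) : ℕ) = n + 1 := by
        have := (σ (Zx x)).isLt; omega
      by_cases hc : close1 x
      · refine ⟨D₁, Or.inr (by simp), ?_⟩
        intro y hy
        simp only [hD₁def, Set.mem_iUnion]
        exact ⟨x, ⟨hv', hc⟩, hy⟩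
      · refine ⟨D₂, Or.inr (by simp), ?_⟩
        intro y hy
        simp only [hD₂def, Set.mem_iUnion]
        exact ⟨x, ⟨hv', hc⟩, hy⟩
end
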